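/- arXiv:2209.12996 — 6 statements merged into one kernel-verified Lean document; each statement's English description precedes it below -/
import Mathlib

section
/- Let Γ be the graph product of a family of groups {Γ_v} over a finite simple graph 𝒢, and let 𝒮, 𝒯 be induced subgraphs with associated full subgroups Γ_𝒮 and Γ_𝒯. If g ∈ Γ satisfies g Γ_𝒯 g⁻¹ ⊆ Γ_𝒮, then there exists h ∈ Γ_𝒮 such that g Γ_𝒯 g⁻¹ = h Γ_{𝒯∩𝒮} h⁻¹. In particular, if 𝒮 = 𝒯 and g Γ_𝒮 g⁻¹ ⊆ Γ_𝒮, then g Γ_𝒮 g⁻¹ = Γ_𝒮. -/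
open Monoid

variable {V : Type*}

/-- Defining relators of a graph product: commutators of elements of adjacent vertex groups. -/
def graphProdRels (G : SimpleGraph V) (Γ : V → Type*) [∀ v, Group (Γ v)] :
    Set (Monoid.CoprodI Γ) :=
  {x | ∃ (u w : V) (a : Γ u) (b : Γ w), G.Adj u w ∧
      x = CoprodI.of a * CoprodI.of b * (CoprodI.of a)⁻¹ * (CoprodI.of b)⁻¹}

/-- The graph product of the family of groups `Γ` over the simple graph `G`. -/
def GraphProduct (G : SimpleGraph V) (Γ : V → Type*) [∀ v, Group (Γ v)] : Type _ :=
  CoprodI Γ ⧸ Subgroup.normalClosure (graphProdRels G Γ)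

instance (G : SimpleGraph V) (Γ : V → Type*) [∀ v, Group (Γ v)] :
    Group (GraphProduct G Γ) :=
  inferInstanceAs (Group (CoprodI Γ ⧸ Subgroup.normalClosure (graphProdRels G Γ)))

/-- The canonical map from a vertex group into the graph product. -/
def GraphProduct.of {G : SimpleGraph V} {Γ : V → Type*} [∀ v, Group (Γ v)] (v : V) :
    Γ v →* GraphProduct G Γ :=
  (QuotientGroup.mk' (Subgroup.normalClosure (graphProdRels G Γ))).comp CoprodI.of

/-- The full subgroup of a graph product associated with a set of vertices. -/
def GraphProduct.full (G : SimpleGraph V) (Γ : V → Type*) [∀ v, Group (Γ v)]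
    (U : Set V) : Subgroup (GraphProduct G Γ) :=
  Subgroup.closure (⋃ u ∈ U, Set.range (GraphProduct.of (G := G) (Γ := Γ) u))

/-- The conjugate subgroup `g H g⁻¹`. -/
def conjSub {G : Type*} [Group G] (g : G) (H : Subgroup G) : Subgroup G :=
  Subgroup.map (MulAut.conj g).toMonoidHom H

/-- The common link of a set of vertices. -/
def lkSet (G : SimpleGraph V) (S : Set V) : Set V :=
  ⋂ u ∈ S, G.neighborSet u

section Aux

variable {G : SimpleGraph V} {Γ : V → Type*} [∀ v, Group (Γ v)]

open Classical in
/-- The canonical projection of a graph product onto a full subgroup, at the level of the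
free product. -/
noncomputable def graphProjAux (G : SimpleGraph V) (Γ : V → Type*) [∀ v, Group (Γ v)]
    (S : Set V) : CoprodI Γ →* GraphProduct G Γ :=
  CoprodI.lift (fun v => if v ∈ S then GraphProduct.of (G := G) v else 1)

open Classical in
lemma graphProjAux_of (S : Set V) {v : V} (a : Γ v) :
    graphProjAux G Γ S (CoprodI.of a) =
      if v ∈ S then GraphProduct.of (G := G) v a else 1 := by
  rw [graphProjAux, CoprodI.lift_of]
  split_ifs with h <;> simp

lemma graphProjAux_ker (S : Set V) :
    Subgroup.normalClosure (graphProdRels G Γ) ≤ (graphProjAux G Γ S).ker := by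
  apply Subgroup.normalClosure_le_normal
  rintro x ⟨u, w, a, b, hadj, rfl⟩
  have hmem : (CoprodI.of a * CoprodI.of b * (CoprodI.of a)⁻¹ * (CoprodI.of b)⁻¹ : CoprodI Γ) ∈
      Subgroup.normalClosure (graphProdRels G Γ) :=
    Subgroup.subset_normalClosure ⟨u, w, a, b, hadj, rfl⟩
  have h1 : ((QuotientGroup.mk (CoprodI.of a * CoprodI.of b * (CoprodI.of a)⁻¹ *
        (CoprodI.of b)⁻¹) : CoprodI Γ ⧸ Subgroup.normalClosure (graphProdRels G Γ))) = 1 :=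
    (QuotientGroup.eq_one_iff _).mpr hmem
  simp only [SetLike.mem_coe, MonoidHom.mem_ker, map_mul, map_inv, graphProjAux_of]
  by_cases hu : u ∈ S
  · by_cases hw : w ∈ S
    · simp only [if_pos hu, if_pos hw]
      exact h1
    · simp [if_pos hu, if_neg hw]
  · by_cases hw : w ∈ S
    · simp [if_neg hu, if_pos hw]
    · simp [if_neg hu, if_neg hw]

/-- The canonical retraction of a graph product onto the full subgroup of `S` (viewed as an
endomorphism of the graph product). -/
noncomputable def graphProj (G : SimpleGraph V) (Γ : V → Type*) [∀ v, Group (Γ v)]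
    (S : Set V) : GraphProduct G Γ →* GraphProduct G Γ :=
  QuotientGroup.lift _ (graphProjAux G Γ S)
    (fun x hx => MonoidHom.mem_ker.mp (graphProjAux_ker S hx))

lemma graphProj_mk (S : Set V) (x : CoprodI Γ) :
    graphProj G Γ S (QuotientGroup.mk x) = graphProjAux G Γ S x := rfl

open Classical in
lemma graphProj_of (S : Set V) {v : V} (a : Γ v) :
    graphProj G Γ S (GraphProduct.of v a) =
      if v ∈ S then GraphProduct.of (G := G) v a else 1 :=
  graphProjAux_of S a

lemma of_mem_full {U : Set V} {v : V} (hv : v ∈ U) (a : Γ v) :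
    GraphProduct.of (G := G) v a ∈ GraphProduct.full G Γ U :=
  Subgroup.subset_closure (Set.mem_biUnion hv ⟨a, rfl⟩)

lemma graphProj_mem_full (S : Set V) (x : GraphProduct G Γ) :
    graphProj G Γ S x ∈ GraphProduct.full G Γ S := by
  induction x using QuotientGroup.induction_on with
  | H y =>
    rw [graphProj_mk]
    induction y using CoprodI.induction_on with
    | one => simp only [map_one]; exact one_mem _
    | of v a =>
      rw [graphProjAux_of]
      split_ifs with h
      · exact of_mem_full h a
      · exact one_mem _
    | mul x y hx hy => rw [map_mul]; exact mul_mem hx hy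

lemma graphProj_eq_self {S : Set V} {x : GraphProduct G Γ}
    (hx : x ∈ GraphProduct.full G Γ S) : graphProj G Γ S x = x := by
  induction hx using Subgroup.closure_induction with
  | mem y hy =>
    obtain ⟨_, ⟨v, rfl⟩, _, ⟨hv, rfl⟩, a, rfl⟩ := hy
    rw [graphProj_of, if_pos hv]
  | one => exact map_one _
  | mul x y hx hy ihx ihy => rw [map_mul, ihx, ihy]
  | inv x hx ihx => rw [map_inv, ihx]

lemma graphProj_mem_full_inter {S T : Set V} {x : GraphProduct G Γ}
    (hx : x ∈ GraphProduct.full G Γ T) :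
    graphProj G Γ S x ∈ GraphProduct.full G Γ (T ∩ S) := by
  induction hx using Subgroup.closure_induction with
  | mem y hy =>
    obtain ⟨_, ⟨v, rfl⟩, _, ⟨hv, rfl⟩, a, rfl⟩ := hy
    rw [graphProj_of]
    split_ifs with h
    · exact of_mem_full (Set.mem_inter hv h) a
    · exact one_mem _
  | one => rw [map_one]; exact one_mem _
  | mul x y hx hy ihx ihy => rw [map_mul]; exact mul_mem ihx ihy
  | inv x hx ihx => rw [map_inv]; exact inv_mem ihx

lemma full_mono {U W : Set V} (h : U ⊆ W) :
    GraphProduct.full G Γ U ≤ GraphProduct.full G Γ W :=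
  Subgroup.closure_mono (Set.biUnion_subset_biUnion_left h)

lemma mem_conjSub {H : Type*} [Group H] {g x : H} {K : Subgroup H} :
    x ∈ conjSub g K ↔ ∃ y ∈ K, g * y * g⁻¹ = x := by
  simp [conjSub, Subgroup.mem_map, MulAut.conj_apply]

lemma conjSub_self {H : Type*} [Group H] {h : H} {K : Subgroup H} (hh : h ∈ K) :
    conjSub h K = K := by
  ext x
  rw [mem_conjSub]
  constructor
  · rintro ⟨y, hy, rfl⟩
    exact mul_mem (mul_mem hh hy) (inv_mem hh)
  · intro hx
    exact ⟨h⁻¹ * x * h, mul_mem (mul_mem (inv_mem hh) hx) hh, by group⟩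

end Aux

/-- If `g Γ_𝒯 g⁻¹ ⊆ Γ_𝒮` then `g Γ_𝒯 g⁻¹ = h Γ_{𝒯∩𝒮} h⁻¹` for some `h ∈ Γ_𝒮`;
in particular, if `𝒮 = 𝒯` then `g Γ_𝒯 g⁻¹ = Γ_𝒮`. -/
theorem stmt_0 {V : Type*} [Fintype V] (G : SimpleGraph V) (Γ : V → Type*)
    [∀ v, Group (Γ v)] (S T : Set V) (g : GraphProduct G Γ)
    (hsub : conjSub g (GraphProduct.full G Γ T) ≤ GraphProduct.full G Γ S) :
    (∃ h ∈ GraphProduct.full G Γ S,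
        conjSub g (GraphProduct.full G Γ T) = conjSub h (GraphProduct.full G Γ (T ∩ S))) ∧
      (S = T → conjSub g (GraphProduct.full G Γ T) = GraphProduct.full G Γ S) := by
  set h := graphProj G Γ S g with hh
  have hhS : h ∈ GraphProduct.full G Γ S := graphProj_mem_full S g
  have key : conjSub g (GraphProduct.full G Γ T) =
      conjSub h (GraphProduct.full G Γ (T ∩ S)) := by
    ext x
    rw [mem_conjSub, mem_conjSub]
    constructor
    · rintro ⟨y, hy, rfl⟩
      have hz : g * y * g⁻¹ ∈ GraphProduct.full G Γ S :=
        hsub (mem_conjSub.mpr ⟨y, hy, rfl⟩)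
      refine ⟨graphProj G Γ S y, graphProj_mem_full_inter hy, ?_⟩
      calc h * graphProj G Γ S y * h⁻¹
          = graphProj G Γ S (g * y * g⁻¹) := by rw [hh, map_mul, map_mul, map_inv]
        _ = g * y * g⁻¹ := graphProj_eq_self hz
    · rintro ⟨y, hy, rfl⟩
      have hyS : y ∈ GraphProduct.full G Γ S := full_mono Set.inter_subset_right hy
      have hyT : y ∈ GraphProduct.full G Γ T := full_mono Set.inter_subset_left hy
      have hz : g * y * g⁻¹ ∈ GraphProduct.full G Γ S :=
        hsub (mem_conjSub.mpr ⟨y, hyT, rfl⟩)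
      refine ⟨y, hyT, ?_⟩
      calc g * y * g⁻¹
          = graphProj G Γ S (g * y * g⁻¹) := (graphProj_eq_self hz).symm
        _ = h * y * h⁻¹ := by
            rw [hh, map_mul, map_mul, map_inv, graphProj_eq_self hyS]
  refine ⟨⟨h, hhS, key⟩, ?_⟩
  rintro rfl
  rw [key, Set.inter_self, conjSub_self hhS]
end

section
/- Let Γ be the graph product of a family of infinite groups {Γ_v} over a finite simple graph 𝒢, and let 𝒮, 𝒯 ⊆ 𝒱 be vertex subsets. If there exists g ∈ Γ such that the subgroup Γ_𝒮 ∩ g Γ_𝒯 g⁻¹ has finite index in Γ_𝒮, then 𝒮 ⊆ 𝒯. -/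
open Monoid

variable {V : Type*}

section Aux

variable {G : SimpleGraph V} {Γ : V → Type*} [∀ v, Group (Γ v)]

/-- Projection of a vertex group onto a fixed vertex group. -/
noncomputable def projHom (v u : V) : Γ u →* Γ v :=
  open Classical in
  if h : u = v then (by subst h; exact MonoidHom.id (Γ u)) else 1

lemma projHom_self (v : V) : (projHom (Γ := Γ) v v) = MonoidHom.id (Γ v) := by
  unfold projHom
  rw [dif_pos rfl]

lemma projHom_ne {v u : V} (h : u ≠ v) : (projHom (Γ := Γ) v u) = 1 := by
  unfold projHom
  rw [dif_neg h]

/-- The retraction of the graph product onto the vertex group `Γ v`. -/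
noncomputable def projGP (G : SimpleGraph V) (Γ : V → Type*) [∀ v, Group (Γ v)] (v : V) :
    GraphProduct G Γ →* Γ v :=
  QuotientGroup.lift _ (CoprodI.lift (projHom v)) (by
    refine Subgroup.normalClosure_le_normal ?_
    rintro x ⟨u, w, a, b, hadj, rfl⟩
    have hne : u ≠ w := hadj.ne
    simp only [SetLike.mem_coe, MonoidHom.mem_ker, map_mul, map_inv, CoprodI.lift_of]
    by_cases hu : u = v
    · have hw : w ≠ v := fun hw => hne (hu.trans hw.symm)
      rw [projHom_ne hw]
      simp
    · rw [projHom_ne hu]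
      simp)

lemma projGP_of_self (v : V) (a : Γ v) :
    projGP G Γ v (GraphProduct.of v a) = a := by
  show QuotientGroup.lift _ _ _ (QuotientGroup.mk' _ (CoprodI.of a)) = a
  rw [QuotientGroup.mk'_apply, QuotientGroup.lift_mk']
  rw [CoprodI.lift_of, projHom_self]
  rfl

lemma projGP_of_ne {v u : V} (h : u ≠ v) (a : Γ u) :
    projGP G Γ v (GraphProduct.of u a) = 1 := by
  show QuotientGroup.lift _ _ _ (QuotientGroup.mk' _ (CoprodI.of a)) = 1
  rw [QuotientGroup.mk'_apply, QuotientGroup.lift_mk']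
  rw [CoprodI.lift_of, projHom_ne h]
  rfl

end Aux

/-- If `Γ_𝒮 ∩ g Γ_𝒯 g⁻¹` has finite index in `Γ_𝒮` for some `g`, then `𝒮 ⊆ 𝒯`. -/
theorem stmt_3 {V : Type*} [Fintype V] (G : SimpleGraph V) (Γ : V → Type*)
    [∀ v, Group (Γ v)] [∀ v, Infinite (Γ v)] (S T : Set V)
    (h : ∃ g : GraphProduct G Γ,
      ((conjSub g (GraphProduct.full G Γ T)).subgroupOf
        (GraphProduct.full G Γ S)).FiniteIndex) :
    S ⊆ T := by
  intro v hvS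
  by_contra hvT
  obtain ⟨g, hfin⟩ := h
  set ρ := projGP G Γ v with hρ
  have hTker : GraphProduct.full G Γ T ≤ ρ.ker := by
    rw [GraphProduct.full, Subgroup.closure_le]
    rintro x hx
    simp only [Set.mem_iUnion] at hx
    obtain ⟨u, hu, a, rfl⟩ := hx
    refine projGP_of_ne (fun he : u = v => hvT ?_) a
    rw [← he]; exact hu
  have hconj : conjSub g (GraphProduct.full G Γ T) ≤ ρ.ker := by
    rintro x ⟨y, hy, rfl⟩
    have hy1 : ρ y = 1 := hTker hy
    simp [MonoidHom.mem_ker, MulAut.conj, hy1]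
  let ρS := ρ.comp (GraphProduct.full G Γ S).subtype
  have hmem : ∀ a : Γ v, GraphProduct.of (G := G) v a ∈ GraphProduct.full G Γ S := by
    intro a
    apply Subgroup.subset_closure
    exact Set.mem_iUnion.2 ⟨v, Set.mem_iUnion.2 ⟨hvS, ⟨a, rfl⟩⟩⟩
  have hsurj : Function.Surjective ρS := by
    intro a
    exact ⟨⟨GraphProduct.of v a, hmem a⟩, projGP_of_self (G := G) v a⟩
  have hker_le : ((conjSub g (GraphProduct.full G Γ T)).subgroupOf
      (GraphProduct.full G Γ S)) ≤ ρS.ker := by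
    intro x hx
    exact hconj hx
  have h0 : ρS.ker.index = 0 := by
    rw [Subgroup.index_ker, MonoidHom.range_eq_top.2 hsurj]
    rw [Nat.card_congr Subgroup.topEquiv.toEquiv]
    exact Nat.card_eq_zero_of_infinite
  have := Subgroup.index_dvd_of_le hker_le
  rw [h0] at this
  exact hfin.index_ne_zero (Nat.eq_zero_of_zero_dvd this)
end

section
/- Let Γ be the graph product of a family of infinite groups {Γ_v} over a finite simple graph 𝒢, let 𝒮 ⊆ 𝒱 be a vertex subset, and let g ∈ Γ. If the subgroup Γ_𝒮 ∩ g Γ_𝒮 g⁻¹ has finite index in Γ_𝒮 (i.e., g quasi-normalizes in the one-sided sense), then g ∈ Γ_{𝒮 ∪ lk(𝒮)}. Consequently, the quasi-normalizer QN_Γ(Γ_𝒮) = {g ∈ Γ : [Γ_𝒮 : Γ_𝒮 ∩ g Γ_𝒮 g⁻¹] < ∞ and [Γ_𝒮 : Γ_𝒮 ∩ g⁻¹ Γ_𝒮 g] < ∞} is contained in Γ_{𝒮 ∪ lk(𝒮)}. -/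
open Monoid

variable {V : Type*}

namespace GPAux

open scoped Classical

variable {Γ : V → Type*} [∀ v, Group (Γ v)]

/-- `
Shuffle equivalence: swapping adjacent commuting letters. -/
inductive Shuf (G : SimpleGraph V) :
    List ((v : V) × Γ v) → List ((v : V) × Γ v) → Prop
  | swap (p s : List ((v : V) × Γ v)) (x y : (v : V) × Γ v) (h : G.Adj x.1 y.1) :
      Shuf G (p ++ x :: y :: s) (p ++ y :: x :: s)
  | refl (w) : Shuf G w w
  | symm {w w'} : Shuf G w w' → Shuf G w' w
  | trans {w₁ w₂ w₃} : Shuf G w₁ w₂ → Shuf G w₂ w₃ → Shuf G w₁ w₃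

/-- No letter at vertex `v` is reachable from the left through adjacent letters. -/
def Fresh (G : SimpleGraph V) (v : V) : List ((v : V) × Γ v) → Prop
  | [] => True
  | l :: w => l.1 ≠ v ∧ (G.Adj l.1 v → Fresh G v w)

/-- Reduced words. -/
def Red (G : SimpleGraph V) : List ((v : V) × Γ v) → Prop
  | [] => True
  | x :: w => x.2 ≠ 1 ∧ Fresh G x.1 w ∧ Red G w

noncomputable def act (G : SimpleGraph V) {v : V} (a : Γ v) :
    List ((v : V) × Γ v) → List ((v : V) × Γ v)
  | [] => if a = 1 then [] else [⟨v, a⟩]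
  | l :: w =>
    if a = 1 then l :: w
    else if h : l.1 = v then
      (if a * (h ▸ l.2) = 1 then w else ⟨v, a * (h ▸ l.2)⟩ :: w)
    else if G.Adj l.1 v then l :: act G a w
    else ⟨v, a⟩ :: l :: w

variable {G : SimpleGraph V}

@[simp] theorem act_one (w : List ((v : V) × Γ v)) {v : V} : act G (1 : Γ v) w = w := by
  cases w <;> simp [act]

theorem act_nil {v : V} {a : Γ v} (ha : a ≠ 1) : act G a ([] : List ((v : V) × Γ v)) = [⟨v, a⟩] := by
  simp [act, ha]

theorem act_cons_same {v : V} {a x : Γ v} (ha : a ≠ 1) (w : List ((v : V) × Γ v)) :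
    act G a (⟨v, x⟩ :: w) = if a * x = 1 then w else ⟨v, a * x⟩ :: w := by
  simp [act, ha]

theorem act_cons_adj {v : V} {a : Γ v} (ha : a ≠ 1) {l : (v : V) × Γ v}
    (hl : G.Adj l.1 v) (w : List ((v : V) × Γ v)) :
    act G a (l :: w) = l :: act G a w := by
  have hne : l.1 ≠ v := G.ne_of_adj hl
  simp [act, ha, hne, hl]

theorem act_cons_nadj {v : V} {a : Γ v} (ha : a ≠ 1) {l : (v : V) × Γ v}
    (hne : l.1 ≠ v) (hl : ¬ G.Adj l.1 v) (w : List ((v : V) × Γ v)) :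
    act G a (l :: w) = ⟨v, a⟩ :: l :: w := by
  simp [act, ha, hne, hl]

set_option linter.unusedSectionVars false

namespace Shuf

theorem cons (l : (v : V) × Γ v) {w w' : List ((v : V) × Γ v)} (h : Shuf G w w') :
    Shuf G (l :: w) (l :: w') := by
  induction h with
  | swap p s x y hadj => exact (Shuf.swap (l :: p) s x y hadj)
  | refl w => exact .refl _
  | symm _ ih => exact ih.symm
  | trans _ _ ih₁ ih₂ => exact ih₁.trans ih₂

theorem append_left (p : List ((v : V) × Γ v)) {w w' : List ((v : V) × Γ v)}
    (h : Shuf G w w') : Shuf G (p ++ w) (p ++ w') := by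
  induction p with
  | nil => exact h
  | cons l p ih => exact ih.cons l

theorem append_right {w w' : List ((v : V) × Γ v)} (h : Shuf G w w')
    (s : List ((v : V) × Γ v)) : Shuf G (w ++ s) (w' ++ s) := by
  induction h with
  | swap p t x y hadj =>
      simpa [List.append_assoc] using Shuf.swap (G := G) p (t ++ s) x y hadj
  | refl w => exact .refl _
  | symm _ ih => exact ih.symm
  | trans _ _ ih₁ ih₂ => exact ih₁.trans ih₂

theorem swap_head {x y : (v : V) × Γ v} (h : G.Adj x.1 y.1)
    (s : List ((v : V) × Γ v)) : Shuf G (x :: y :: s) (y :: x :: s) :=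
  Shuf.swap [] s x y h

theorem perm {w w' : List ((v : V) × Γ v)} (h : Shuf G w w') : w.Perm w' := by
  induction h with
  | swap p s x y hadj => exact (List.Perm.append_left p (List.Perm.swap y x s))
  | refl w => exact .refl _
  | symm _ ih => exact ih.symm
  | trans _ _ ih₁ ih₂ => exact ih₁.trans ih₂

theorem length_eq {w w' : List ((v : V) × Γ v)} (h : Shuf G w w') :
    w.length = w'.length := h.perm.length_eq

open scoped Classical in
theorem filter_eq {w w' : List ((v : V) × Γ v)} (h : Shuf G w w')
    (P : ((v : V) × Γ v) → Prop)
    (hP : ∀ x y, P x → P y → ¬ G.Adj x.1 y.1) :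
    w.filter (fun l => P l) = w'.filter (fun l => P l) := by
  induction h with
  | swap p s x y hadj =>
      have : ¬ (P x ∧ P y) := fun ⟨hx, hy⟩ => hP x y hx hy hadj
      by_cases hx : P x <;> by_cases hy : P y <;>
        simp_all [List.filter_append, List.filter_cons]
  | refl w => rfl
  | symm _ ih => exact ih.symm
  | trans _ _ ih₁ ih₂ => exact ih₁.trans ih₂

end Shuf

section ActLemmas

variable {v : V}

@[simp] theorem fresh_nil {t : V} : Fresh G t ([] : List ((v : V) × Γ v)) := trivial

theorem fresh_cons {t : V} {l : (v : V) × Γ v} {w : List ((v : V) × Γ v)} :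
    Fresh G t (l :: w) ↔ l.1 ≠ t ∧ (G.Adj l.1 t → Fresh G t w) := Iff.rfl

@[simp] theorem red_nil : Red G ([] : List ((v : V) × Γ v)) := trivial

theorem red_cons {x : (v : V) × Γ v} {w : List ((v : V) × Γ v)} :
    Red G (x :: w) ↔ x.2 ≠ 1 ∧ Fresh G x.1 w ∧ Red G w := Iff.rfl

theorem red_tail {x : (v : V) × Γ v} {w : List ((v : V) × Γ v)} (h : Red G (x :: w)) :
    Red G w := h.2.2

theorem act_length_le (a : Γ v) (w : List ((v : V) × Γ v)) :
    (act G a w).length ≤ w.length + 1 := by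
  by_cases ha : a = 1
  · subst ha; simp
  · induction w with
    | nil => rw [act_nil ha]; simp
    | cons l w ih =>
      rcases l with ⟨u, x⟩
      by_cases h : u = v
      · subst h
        rw [act_cons_same ha]
        split <;> simp <;> omega
      · by_cases hadj : G.Adj u v
        · rw [act_cons_adj ha hadj]
          simpa using Nat.succ_le_succ ih
        · rw [act_cons_nadj ha h hadj]; simp

theorem fresh_act {t : V} (htv : G.Adj t v) (a : Γ v) {w : List ((v : V) × Γ v)}
    (hf : Fresh G t w) : Fresh G t (act G a w) := by
  by_cases ha : a = 1
  · simpa [ha]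
  · induction w with
    | nil =>
      rw [act_nil ha]
      exact ⟨(G.ne_of_adj htv).symm, fun _ => trivial⟩
    | cons l w ih =>
      obtain ⟨hne, himp⟩ := hf
      rcases l with ⟨u, x⟩
      by_cases h : u = v
      · subst h
        rw [act_cons_same ha]
        split
        · exact himp htv.symm
        · exact ⟨(G.ne_of_adj htv).symm, fun _ => himp htv.symm⟩
      · by_cases hadj : G.Adj u v
        · rw [act_cons_adj ha hadj]
          exact ⟨hne, fun h2 => ih (himp h2)⟩
        · rw [act_cons_nadj ha h hadj]
          exact ⟨(G.ne_of_adj htv).symm, fun _ => ⟨hne, himp⟩⟩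

theorem red_act (a : Γ v) {w : List ((v : V) × Γ v)} (hw : Red G w) :
    Red G (act G a w) := by
  by_cases ha : a = 1
  · simpa [ha]
  · induction w with
    | nil =>
      rw [act_nil ha]
      exact ⟨ha, trivial, trivial⟩
    | cons l w ih =>
      obtain ⟨hl1, hfr, hred⟩ := hw
      rcases l with ⟨u, x⟩
      by_cases h : u = v
      · subst h
        rw [act_cons_same ha]
        split
        · exact hred
        · next h2 => exact ⟨h2, hfr, hred⟩
      · by_cases hadj : G.Adj u v
        · rw [act_cons_adj ha hadj]
          exact ⟨hl1, fresh_act hadj a hfr, ih hred⟩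
        · rw [act_cons_nadj ha h hadj]
          exact ⟨ha, ⟨h, fun hc => absurd hc hadj⟩, hl1, hfr, hred⟩

theorem shuf_act_prepend {a : Γ v} (ha : a ≠ 1) {w : List ((v : V) × Γ v)}
    (hf : Fresh G v w) : Shuf G (act G a w) (⟨v, a⟩ :: w) := by
  induction w with
  | nil => rw [act_nil ha]; exact .refl _
  | cons l w ih =>
    obtain ⟨hne, himp⟩ := hf
    by_cases hadj : G.Adj l.1 v
    · rw [act_cons_adj ha hadj]
      exact ((ih (himp hadj)).cons l).trans (Shuf.swap_head hadj w)
    · rw [act_cons_nadj ha hne hadj]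
      exact .refl _

theorem act_verts {U : Set V} (a : Γ v) (hv : v ∈ U) {w : List ((v : V) × Γ v)}
    (hw : ∀ l ∈ w, l.1 ∈ U) : ∀ l ∈ act G a w, l.1 ∈ U := by
  by_cases ha : a = 1
  · simpa [ha] using hw
  · induction w with
    | nil =>
      rw [act_nil ha]
      intro l hl
      rcases List.mem_singleton.mp hl with rfl
      exact hv
    | cons l w ih =>
      rcases l with ⟨u, x⟩
      by_cases h : u = v
      · subst h
        rw [act_cons_same ha]
        split
        · exact fun l hl => hw l (List.mem_cons_of_mem _ hl)
        · intro l hl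
          rcases List.mem_cons.mp hl with rfl | hl
          · exact hv
          · exact hw l (List.mem_cons_of_mem _ hl)
      · by_cases hadj : G.Adj u v
        · rw [act_cons_adj ha hadj]
          intro m hm
          rcases List.mem_cons.mp hm with rfl | hm
          · exact hw ⟨u, x⟩ (List.mem_cons_self)
          · exact ih (fun l hl => hw l (List.mem_cons_of_mem _ hl)) m hm
        · rw [act_cons_nadj ha h hadj]
          intro l hl
          rcases List.mem_cons.mp hl with rfl | hl
          · exact hv
          · exact hw l hl

end ActLemmas

section ActLaws

variable {v : V}

theorem act_shuf (a : Γ v) {w w' : List ((v : V) × Γ v)} (h : Shuf G w w') :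
    Shuf G (act G a w) (act G a w') := by
  by_cases ha : a = 1
  · simpa [ha] using h
  · induction h with
    | refl w => exact .refl _
    | symm _ ih => exact ih.symm
    | trans _ _ ih₁ ih₂ => exact ih₁.trans ih₂
    | swap p s x y hadj =>
      induction p with
      | cons l p ih =>
        by_cases hl : l.1 = v
        · rcases l with ⟨u, z⟩
          obtain rfl : u = v := hl
          simp only [List.cons_append]
          rw [act_cons_same ha, act_cons_same ha]
          by_cases hz : a * z = 1
          · simp only [if_pos hz]
            exact Shuf.swap p s x y hadj
          · simp only [if_neg hz]
            exact (Shuf.swap p s x y hadj).cons _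
        · by_cases hadj2 : G.Adj l.1 v
          · simp only [List.cons_append]
            rw [act_cons_adj ha hadj2, act_cons_adj ha hadj2]
            exact ih.cons l
          · simp only [List.cons_append]
            rw [act_cons_nadj ha hl hadj2, act_cons_nadj ha hl hadj2]
            exact ((Shuf.swap p s x y hadj).cons l).cons _
      | nil =>
        simp only [List.nil_append]
        by_cases hx : x.1 = v
        · have hy : G.Adj y.1 v := by
            have h2 := hadj.symm; rwa [hx] at h2
          rcases x with ⟨u, z⟩
          obtain rfl : u = v := hx
          rw [act_cons_same ha, act_cons_adj ha hy, act_cons_same ha]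
          by_cases hz : a * z = 1
          · simp only [if_pos hz]
            exact .refl _
          · simp only [if_neg hz]
            exact Shuf.swap_head hy.symm s
        · by_cases hy : y.1 = v
          · have hx2 : G.Adj x.1 v := by rwa [hy] at hadj
            rcases y with ⟨u, z⟩
            obtain rfl : u = v := hy
            rw [act_cons_adj ha hx2, act_cons_same ha, act_cons_same ha]
            by_cases hz : a * z = 1
            · simp only [if_pos hz]
              exact .refl _
            · simp only [if_neg hz]
              exact Shuf.swap_head hx2 s
          · by_cases hxa : G.Adj x.1 v <;> by_cases hya : G.Adj y.1 v
            · rw [act_cons_adj ha hxa, act_cons_adj ha hya,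
                act_cons_adj ha hya, act_cons_adj ha hxa]
              exact Shuf.swap_head hadj _
            · rw [act_cons_adj ha hxa, act_cons_nadj ha hy hya,
                act_cons_nadj ha hy hya]
              exact (Shuf.swap_head hxa _).trans (Shuf.swap [⟨v, a⟩] s x y hadj)
            · rw [act_cons_nadj ha hx hxa, act_cons_adj ha hya,
                act_cons_nadj ha hx hxa]
              exact (Shuf.swap [⟨v, a⟩] s x y hadj).trans
                (Shuf.swap_head hya.symm _)
            · rw [act_cons_nadj ha hx hxa, act_cons_nadj ha hy hya]
              exact Shuf.swap [⟨v, a⟩] s x y hadj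

theorem act_act_same (a b : Γ v) {w : List ((v : V) × Γ v)} (hw : Red G w) :
    Shuf G (act G a (act G b w)) (act G (a * b) w) := by
  by_cases ha : a = 1
  · rw [ha, act_one, one_mul]; exact .refl _
  by_cases hb : b = 1
  · rw [hb, act_one, mul_one]; exact .refl _
  induction w with
  | nil =>
    rw [act_nil hb, act_cons_same ha]
    by_cases hab : a * b = 1
    · simp only [if_pos hab, hab, act_one]
      exact .refl _
    · simp only [if_neg hab]
      rw [act_nil hab]
      exact .refl _
  | cons l w ih =>
    obtain ⟨hl1, hfr, hred⟩ := hw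
    rcases l with ⟨u, x⟩
    by_cases h : u = v
    · subst h
      rw [act_cons_same hb]
      by_cases hbx : b * x = 1
      · simp only [if_pos hbx]
        by_cases hab : a * b = 1
        · have hax : a = x := by
            rw [eq_inv_of_mul_eq_one_left hab, ← eq_inv_of_mul_eq_one_right hbx]
          rw [hab, act_one, hax]
          exact shuf_act_prepend hl1 hfr
        · rw [act_cons_same hab]
          have h1 : a * b * x = a := by rw [mul_assoc, hbx, mul_one]
          simp only [h1, if_neg ha]
          exact shuf_act_prepend ha hfr
      · simp only [if_neg hbx]
        rw [act_cons_same ha]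
        by_cases hab : a * b = 1
        · have h1 : a * (b * x) = x := by rw [← mul_assoc, hab, one_mul]
          simp only [h1, if_neg hl1, hab, act_one]
          exact .refl _
        · rw [act_cons_same hab]
          have h1 : a * (b * x) = a * b * x := (mul_assoc a b x).symm
          rw [h1]
          exact .refl _
    · by_cases hadj : G.Adj u v
      · rw [act_cons_adj hb hadj, act_cons_adj ha hadj]
        by_cases hab : a * b = 1
        · have h2 := ih hred
          rw [hab, act_one] at h2 ⊢
          exact h2.cons _
        · rw [act_cons_adj hab hadj]
          exact (ih hred).cons _
      · rw [act_cons_nadj hb h hadj, act_cons_same ha]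
        by_cases hab : a * b = 1
        · simp only [if_pos hab, hab, act_one]
          exact .refl _
        · simp only [if_neg hab]
          rw [act_cons_nadj hab h hadj]
          exact .refl _

theorem act_act_comm {u : V} (huv : G.Adj u v) (a : Γ u) (b : Γ v)
    (w : List ((v : V) × Γ v)) :
    Shuf G (act G a (act G b w)) (act G b (act G a w)) := by
  by_cases ha : a = 1
  · rw [ha, act_one, act_one]; exact .refl _
  by_cases hb : b = 1
  · rw [hb, act_one, act_one]; exact .refl _
  have hvu : G.Adj v u := huv.symm
  have hne : u ≠ v := G.ne_of_adj huv
  induction w with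
  | nil =>
    rw [act_nil hb, act_nil ha, act_cons_adj (l := ⟨u, a⟩) hb huv,
      act_cons_adj (l := ⟨v, b⟩) ha hvu, act_nil ha, act_nil hb]
    exact Shuf.swap_head hvu _
  | cons l w ih =>
    by_cases hlu : l.1 = u
    · rcases l with ⟨t, x⟩
      obtain rfl : t = u := hlu
      rw [act_cons_adj (l := ⟨t, x⟩) hb huv, act_cons_same ha, act_cons_same ha]
      by_cases hax : a * x = 1
      · simp only [if_pos hax]
        exact .refl _
      · simp only [if_neg hax]
        rw [act_cons_adj (l := ⟨t, a * x⟩) hb huv]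
        exact .refl _
    · by_cases hlv : l.1 = v
      · rcases l with ⟨t, x⟩
        obtain rfl : t = v := hlv
        rw [act_cons_adj (l := ⟨t, x⟩) ha hvu, act_cons_same hb, act_cons_same hb]
        by_cases hbx : b * x = 1
        · simp only [if_pos hbx]
          exact .refl _
        · simp only [if_neg hbx]
          rw [act_cons_adj (l := ⟨t, b * x⟩) ha hvu]
          exact .refl _
      · by_cases hlva : G.Adj l.1 v <;> by_cases hlua : G.Adj l.1 u
        · rw [act_cons_adj hb hlva, act_cons_adj ha hlua,
            act_cons_adj ha hlua, act_cons_adj hb hlva]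
          exact ih.cons l
        · rw [act_cons_adj hb hlva, act_cons_nadj ha hlu hlua,
            act_cons_nadj ha hlu hlua, act_cons_adj (l := ⟨u, a⟩) hb huv,
            act_cons_adj hb hlva]
          exact .refl _
        · rw [act_cons_nadj hb hlv hlva, act_cons_adj (l := ⟨v, b⟩) ha hvu,
            act_cons_adj ha hlua, act_cons_nadj hb hlv hlva]
          exact .refl _
        · rw [act_cons_nadj hb hlv hlva, act_cons_adj (l := ⟨v, b⟩) ha hvu,
            act_cons_nadj ha hlu hlua,
            act_cons_adj (l := ⟨u, a⟩) hb huv, act_cons_nadj hb hlv hlva]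
          exact Shuf.swap_head hvu _

end ActLaws

section GroupSide

theorem of_comm {u v : V} (h : G.Adj u v) (a : Γ u) (b : Γ v) :
    GraphProduct.of (G := G) u a * GraphProduct.of (G := G) v b =
      GraphProduct.of (G := G) v b * GraphProduct.of (G := G) u a := by
  have hrel : CoprodI.of a * CoprodI.of b * (CoprodI.of a)⁻¹ * (CoprodI.of b)⁻¹ ∈
      Subgroup.normalClosure (graphProdRels G Γ) :=
    Subgroup.subset_normalClosure ⟨u, v, a, b, h, rfl⟩
  have h1 : GraphProduct.of (G := G) u a * GraphProduct.of (G := G) v b *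
      (GraphProduct.of (G := G) u a)⁻¹ * (GraphProduct.of (G := G) v b)⁻¹ = 1 := by
    have := (QuotientGroup.eq_one_iff _).mpr hrel
    simp [GraphProduct.of, map_mul] at this
    exact this
  have h2 := mul_inv_eq_one.mp h1
  have h3 := mul_inv_eq_iff_eq_mul.mp h2
  exact h3

noncomputable def pr : List ((v : V) × Γ v) → GraphProduct G Γ :=
  fun w => (w.map fun l => GraphProduct.of (G := G) l.1 l.2).prod

@[simp] theorem pr_nil : pr (G := G) (Γ := Γ) [] = 1 := rfl

@[simp] theorem pr_cons (l : (v : V) × Γ v) (w : List ((v : V) × Γ v)) :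
    pr (G := G) (l :: w) = GraphProduct.of (G := G) l.1 l.2 * pr (G := G) w := by
  simp [pr]

theorem pr_append (w u : List ((v : V) × Γ v)) :
    pr (G := G) (w ++ u) = pr (G := G) w * pr (G := G) u := by
  simp [pr]

theorem pr_comm {t : V} (x : Γ t) {w : List ((v : V) × Γ v)}
    (h : ∀ l ∈ w, G.Adj l.1 t) :
    GraphProduct.of (G := G) t x * pr (G := G) w =
      pr (G := G) w * GraphProduct.of (G := G) t x := by
  induction w with
  | nil => simp
  | cons l w ih =>
    have h1 := of_comm (h l (List.mem_cons_self)) l.2 x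
    have h2 := ih (fun l hl => h l (List.mem_cons_of_mem _ hl))
    simp only [pr_cons]
    rw [← mul_assoc, ← h1, mul_assoc, h2, mul_assoc]

theorem pr_shuf {w w' : List ((v : V) × Γ v)} (h : Shuf G w w') :
    pr (G := G) w = pr (G := G) w' := by
  induction h with
  | swap p s x y hadj =>
    simp only [pr_append, pr_cons]
    rw [← mul_assoc (GraphProduct.of x.1 x.2), of_comm hadj, mul_assoc]
  | refl w => rfl
  | symm _ ih => exact ih.symm
  | trans _ _ ih₁ ih₂ => exact ih₁.trans ih₂

theorem pr_act {v : V} (a : Γ v) (w : List ((v : V) × Γ v)) :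
    pr (G := G) (act G a w) = GraphProduct.of (G := G) v a * pr (G := G) w := by
  by_cases ha : a = 1
  · simp [ha]
  · induction w with
    | nil => rw [act_nil ha]; simp
    | cons l w ih =>
      rcases l with ⟨u, x⟩
      by_cases h : u = v
      · subst h
        rw [act_cons_same ha]
        by_cases hx : a * x = 1
        · simp only [if_pos hx, pr_cons]
          rw [← mul_assoc, ← map_mul, hx, map_one, one_mul]
        · simp only [if_neg hx, pr_cons]
          rw [← mul_assoc, ← map_mul]
      · by_cases hadj : G.Adj u v
        · rw [act_cons_adj ha hadj]
          simp only [pr_cons]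
          rw [ih, ← mul_assoc, ← mul_assoc,
            of_comm (G := G) (show G.Adj u v from hadj) x a]
        · rw [act_cons_nadj ha h hadj]
          simp only [pr_cons]

theorem pr_left_extract {v : V} (x : Γ v) {α β : List ((v : V) × Γ v)}
    (h : ∀ l ∈ α, G.Adj l.1 v) :
    pr (G := G) (α ++ ⟨v, x⟩ :: β) =
      GraphProduct.of (G := G) v x * pr (G := G) (α ++ β) := by
  rw [pr_append, pr_append, pr_cons, ← mul_assoc, ← pr_comm x h, mul_assoc]

theorem pr_right_extract {v : V} (x : Γ v) {α β : List ((v : V) × Γ v)}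
    (h : ∀ l ∈ β, G.Adj l.1 v) :
    pr (G := G) (α ++ ⟨v, x⟩ :: β) =
      pr (G := G) (α ++ β) * GraphProduct.of (G := G) v x := by
  rw [pr_append, pr_append, pr_cons, ← mul_assoc, mul_assoc (pr (G:=G) α), pr_comm x h, mul_assoc]

end GroupSide

section Quot

abbrev RWord (G : SimpleGraph V) (Γ : V → Type*) [∀ v, Group (Γ v)] : Type _ :=
  {w : List ((v : V) × Γ v) // Red G w}

instance rwSetoid (G : SimpleGraph V) (Γ : V → Type*) [∀ v, Group (Γ v)] :
    Setoid (RWord G Γ) :=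
  ⟨fun x y => Shuf G x.1 y.1,
    ⟨fun _ => .refl _, fun h => h.symm, fun h h' => h.trans h'⟩⟩

abbrev NF (G : SimpleGraph V) (Γ : V → Type*) [∀ v, Group (Γ v)] : Type _ :=
  Quotient (rwSetoid G Γ)

noncomputable def actQ {v : V} (a : Γ v) : NF G Γ → NF G Γ :=
  Quotient.map (fun w => ⟨act G a w.1, red_act a w.2⟩) (fun _ _ h => act_shuf a h)

@[simp] theorem actQ_mk {v : V} (a : Γ v) (w : RWord G Γ) :
    actQ a (⟦w⟧ : NF G Γ) = ⟦⟨act G a w.1, red_act a w.2⟩⟧ := rfl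

theorem actQ_one {v : V} (x : NF G Γ) : actQ (1 : Γ v) x = x := by
  refine Quotient.inductionOn x (fun w => ?_)
  rw [actQ_mk]
  refine Quotient.sound ?_
  show Shuf G (act G (1 : Γ v) w.1) w.1
  rw [act_one]
  exact .refl _

theorem actQ_mul {v : V} (a b : Γ v) (x : NF G Γ) :
    actQ a (actQ b x) = actQ (a * b) x := by
  refine Quotient.inductionOn x (fun w => ?_)
  rw [actQ_mk, actQ_mk, actQ_mk]
  exact Quotient.sound (act_act_same a b w.2)

theorem actQ_comm {u v : V} (h : G.Adj u v) (a : Γ u) (b : Γ v) (x : NF G Γ) :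
    actQ a (actQ b x) = actQ b (actQ a x) := by
  refine Quotient.inductionOn x (fun w => ?_)
  rw [actQ_mk, actQ_mk, actQ_mk, actQ_mk]
  exact Quotient.sound (act_act_comm h a b w.1)

noncomputable def permOf (v : V) : Γ v →* Equiv.Perm (NF G Γ) where
  toFun a :=
    { toFun := actQ a
      invFun := actQ a⁻¹
      left_inv := fun x => by rw [actQ_mul, inv_mul_cancel, actQ_one]
      right_inv := fun x => by rw [actQ_mul, mul_inv_cancel, actQ_one] }
  map_one' := Equiv.ext fun x => actQ_one x
  map_mul' := fun a b => Equiv.ext fun x => by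
    simp only [Equiv.coe_fn_mk, Equiv.Perm.mul_apply]
    exact (actQ_mul a b x).symm

@[simp] theorem permOf_apply {v : V} (a : Γ v) (x : NF G Γ) :
    permOf v a x = actQ a x := rfl

noncomputable def bigF : CoprodI Γ →* Equiv.Perm (NF G Γ) :=
  CoprodI.lift fun v => permOf (G := G) v

theorem rels_le_ker :
    Subgroup.normalClosure (graphProdRels G Γ) ≤ (bigF (G := G) (Γ := Γ)).ker := by
  refine Subgroup.normalClosure_le_normal ?_
  rintro x ⟨u, w, a, b, hadj, rfl⟩
  have hc : Commute (permOf (G := G) u a) (permOf (G := G) w b) :=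
    Equiv.ext fun x => by
      simp only [Equiv.Perm.mul_apply, permOf_apply]
      exact actQ_comm hadj a b x
  open commutatorElement in
  have h1 : ⁅permOf (G := G) u a, permOf (G := G) w b⁆ = 1 :=
    commutatorElement_eq_one_iff_commute.mpr hc
  have : bigF (G := G) (Γ := Γ)
      (CoprodI.of a * CoprodI.of b * (CoprodI.of a)⁻¹ * (CoprodI.of b)⁻¹) = 1 := by
    simp only [map_mul, map_inv, bigF, CoprodI.lift_of]
    exact h1
  exact this

noncomputable def phi : GraphProduct G Γ →* Equiv.Perm (NF G Γ) :=
  QuotientGroup.lift (Subgroup.normalClosure (graphProdRels G Γ)) bigF rels_le_ker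

theorem phi_of {v : V} (a : Γ v) :
    phi (GraphProduct.of (G := G) v a) = permOf (G := G) v a := by
  have h1 : phi (GraphProduct.of (G := G) v a) =
      bigF (G := G) (Γ := Γ) (CoprodI.of a) :=
    QuotientGroup.lift_mk' _ rels_le_ker _
  rw [h1, bigF]
  exact CoprodI.lift_of _ _

def emptyNF : NF G Γ := ⟦⟨[], red_nil⟩⟧

noncomputable def nf (g : GraphProduct G Γ) : NF G Γ := phi g emptyNF

noncomputable def prQ : NF G Γ → GraphProduct G Γ :=
  Quotient.lift (fun w => pr (G := G) w.1) fun _ _ h => pr_shuf h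

@[simp] theorem prQ_mk (w : RWord G Γ) : prQ (⟦w⟧ : NF G Γ) = pr (G := G) w.1 := rfl

theorem gp_induction {C : GraphProduct G Γ → Prop} (h1 : C 1)
    (hof : ∀ (v : V) (a : Γ v), C (GraphProduct.of (G := G) v a))
    (hmul : ∀ x y, C x → C y → C (x * y)) : ∀ g, C g := by
  intro g
  obtain ⟨x, rfl⟩ := QuotientGroup.mk_surjective g
  induction x using Monoid.CoprodI.induction_on with
  | one => exact h1
  | of i m => exact hof i m
  | mul x y hx hy => exact hmul _ _ hx hy

theorem prQ_phi (g : GraphProduct G Γ) (x : NF G Γ) :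
    prQ (phi g x) = g * prQ x := by
  let K : Subgroup (GraphProduct G Γ) :=
    { carrier := {g | ∀ x : NF G Γ, prQ (phi g x) = g * prQ x}
      one_mem' := by intro x; simp
      mul_mem' := by
        intro a b ha hb x
        rw [map_mul, Equiv.Perm.mul_apply, ha, hb, mul_assoc]
      inv_mem' := by
        intro a ha x
        have h2 := ha ((phi a⁻¹) x)
        have h3 : phi a ((phi a⁻¹) x) = x := by
          rw [← Equiv.Perm.mul_apply, ← map_mul, mul_inv_cancel, map_one,
            Equiv.Perm.one_apply]
        rw [h3] at h2
        rw [h2, inv_mul_cancel_left] }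
  have hall : ∀ g, g ∈ K := by
    refine gp_induction K.one_mem ?_ (fun x y hx hy => K.mul_mem hx hy)
    intro v a x
    refine Quotient.inductionOn x (fun w => ?_)
    rw [phi_of, permOf_apply, actQ_mk, prQ_mk, prQ_mk]
    exact pr_act a w.1
  exact hall g x

@[simp] theorem prQ_empty : prQ (emptyNF (G := G) (Γ := Γ)) = 1 := rfl

theorem prQ_nf (g : GraphProduct G Γ) : prQ (nf g) = g := by
  rw [nf, prQ_phi, prQ_empty, mul_one]

theorem nf_mul_of {v : V} (a : Γ v) (g : GraphProduct G Γ) :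
    nf (GraphProduct.of (G := G) v a * g) = actQ a (nf g) := by
  rw [nf, map_mul, Equiv.Perm.mul_apply, phi_of, permOf_apply, nf]

theorem nf_uniq : ∀ (w : List ((v : V) × Γ v)) (h : Red G w),
    nf (pr (G := G) w) = ⟦⟨w, h⟩⟧ := by
  intro w
  induction w with
  | nil =>
    intro h
    show nf 1 = _
    rw [nf, map_one, Equiv.Perm.one_apply]
    rfl
  | cons x w ih =>
    intro h
    obtain ⟨h1, hfr, hred⟩ := h
    rw [pr_cons, nf_mul_of, ih hred, actQ_mk]
    refine Quotient.sound ?_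
    show Shuf G (act G x.2 w) (x :: w)
    have h2 := shuf_act_prepend (G := G) h1 hfr
    rwa [Sigma.eta] at h2

end Quot

section Invariants

def lenQ : NF G Γ → ℕ := Quotient.lift (fun w => w.1.length) fun _ _ h => h.length_eq

@[simp] theorem lenQ_mk (w : RWord G Γ) : lenQ (⟦w⟧ : NF G Γ) = w.1.length := rfl

noncomputable def ell (g : GraphProduct G Γ) : ℕ := lenQ (nf g)

theorem nf_one : nf (1 : GraphProduct G Γ) = emptyNF := by
  rw [nf, map_one, Equiv.Perm.one_apply]

theorem ell_one : ell (1 : GraphProduct G Γ) = 0 := by rw [ell, nf_one]; rfl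

theorem lenQ_actQ_le {v : V} (a : Γ v) (x : NF G Γ) :
    lenQ (actQ a x) ≤ lenQ x + 1 := by
  refine Quotient.inductionOn x (fun w => ?_)
  rw [actQ_mk, lenQ_mk, lenQ_mk]
  exact act_length_le a w.1

theorem ell_of_mul_le {v : V} (a : Γ v) (g : GraphProduct G Γ) :
    ell (GraphProduct.of (G := G) v a * g) ≤ ell g + 1 := by
  rw [ell, nf_mul_of]
  exact lenQ_actQ_le a (nf g)

theorem ell_pr_le (w : List ((v : V) × Γ v)) : ell (pr (G := G) w) ≤ w.length := by
  induction w with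
  | nil => simp [ell_one]
  | cons l w ih =>
    rw [pr_cons]
    calc ell (GraphProduct.of (G := G) l.1 l.2 * pr (G := G) w) ≤ ell (pr (G := G) w) + 1 :=
          ell_of_mul_le _ _
    _ ≤ w.length + 1 := Nat.succ_le_succ ih
    _ = (l :: w).length := rfl

def vertsIn (U : Set V) : NF G Γ → Prop :=
  Quotient.lift (fun w => ∀ l ∈ w.1, l.1 ∈ U) fun x y h => by
    have hp := h.perm
    simp only [eq_iff_iff]
    exact ⟨fun H l hl => H l (hp.mem_iff.mpr hl), fun H l hl => H l (hp.mem_iff.mp hl)⟩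

@[simp] theorem vertsIn_mk (U : Set V) (w : RWord G Γ) :
    vertsIn U (⟦w⟧ : NF G Γ) ↔ ∀ l ∈ w.1, l.1 ∈ U := Iff.rfl

theorem vertsIn_empty (U : Set V) : vertsIn U (emptyNF (G := G) (Γ := Γ)) :=
  fun l hl => absurd hl (List.not_mem_nil)

theorem of_mem_full {U : Set V} {v : V} (hv : v ∈ U) (a : Γ v) :
    GraphProduct.of (G := G) v a ∈ GraphProduct.full G Γ U :=
  Subgroup.subset_closure (Set.mem_biUnion hv ⟨a, rfl⟩)

theorem pr_mem_full {U : Set V} {w : List ((v : V) × Γ v)} (h : ∀ l ∈ w, l.1 ∈ U) :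
    pr (G := G) w ∈ GraphProduct.full G Γ U := by
  induction w with
  | nil => exact Subgroup.one_mem _
  | cons l w ih =>
    rw [pr_cons]
    exact Subgroup.mul_mem _ (of_mem_full (h l (List.mem_cons_self)) l.2)
      (ih fun l hl => h l (List.mem_cons_of_mem _ hl))

theorem full_mono {U U' : Set V} (h : U ⊆ U') :
    GraphProduct.full G Γ U ≤ GraphProduct.full G Γ U' := by
  refine Subgroup.closure_mono ?_
  refine Set.iUnion₂_subset fun v hv => ?_
  exact Set.subset_iUnion₂_of_subset v (h hv) le_rfl

theorem vertsIn_nf_of_mem_full {U : Set V} {g : GraphProduct G Γ}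
    (hg : g ∈ GraphProduct.full G Γ U) : vertsIn U (nf g) := by
  let K : Subgroup (GraphProduct G Γ) :=
    { carrier := {g | ∀ x : NF G Γ,
        (vertsIn U x → vertsIn U (phi g x)) ∧ (vertsIn U x → vertsIn U (phi g⁻¹ x))}
      one_mem' := by
        intro x
        simp only [map_one, Equiv.Perm.one_apply, inv_one]
        exact ⟨id, id⟩
      mul_mem' := by
        intro a b ha hb x
        constructor
        · intro hx
          rw [map_mul, Equiv.Perm.mul_apply]
          exact (ha (phi b x)).1 ((hb x).1 hx)
        · intro hx
          rw [mul_inv_rev, map_mul, Equiv.Perm.mul_apply]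
          exact (hb (phi a⁻¹ x)).2 ((ha x).2 hx)
      inv_mem' := by
        intro a ha x
        refine ⟨(ha x).2, ?_⟩
        rw [inv_inv]
        exact (ha x).1 }
  have hK : GraphProduct.full G Γ U ≤ K := by
    rw [GraphProduct.full, Subgroup.closure_le]
    rintro y hy
    simp only [Set.mem_iUnion] at hy
    obtain ⟨v, hv, a, rfl⟩ := hy
    have key : ∀ (b : Γ v) (x : NF G Γ), vertsIn U x →
        vertsIn U (phi (GraphProduct.of (G := G) v b) x) := by
      intro b x
      refine Quotient.inductionOn x (fun w => ?_)
      intro hx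
      rw [phi_of, permOf_apply, actQ_mk]
      exact act_verts b hv hx
    intro x
    constructor
    · exact key a x
    · rw [← map_inv]
      exact key a⁻¹ x
  have h2 := (hK hg (emptyNF (G := G) (Γ := Γ))).1 (vertsIn_empty U)
  exact h2

theorem of_ne_one {v : V} {a : Γ v} (ha : a ≠ 1) :
    GraphProduct.of (G := G) v a ≠ 1 := by
  intro h
  have h1 : Red G [⟨v, a⟩] := ⟨ha, trivial, trivial⟩
  have h2 : pr (G := G) [⟨v, a⟩] = GraphProduct.of (G := G) v a := by simp
  have h3 := nf_uniq [⟨v, a⟩] h1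
  rw [h2, h, nf_one] at h3
  have h4 := congrArg lenQ h3
  rw [emptyNF, lenQ_mk, lenQ_mk] at h4
  simp at h4

end Invariants

section FreshLemmas

theorem fresh_append {v : V} {w u : List ((v : V) × Γ v)}
    (hw : Fresh G v w) (hu : Fresh G v u) : Fresh G v (w ++ u) := by
  induction w with
  | nil => exact hu
  | cons l w ih =>
    obtain ⟨h1, h2⟩ := hw
    exact ⟨h1, fun h => ih (h2 h)⟩

theorem fresh_append_blocker {v : V} {w u : List ((v : V) × Γ v)}
    (hb : ∃ z ∈ w, ¬ G.Adj z.1 v) (hw : Fresh G v w) : Fresh G v (w ++ u) := by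
  induction w with
  | nil => obtain ⟨z, hz, _⟩ := hb; exact absurd hz (List.not_mem_nil)
  | cons l w ih =>
    obtain ⟨h1, h2⟩ := hw
    obtain ⟨z, hz, hzn⟩ := hb
    rcases List.mem_cons.mp hz with rfl | hz
    · exact ⟨h1, fun h => absurd h hzn⟩
    · exact ⟨h1, fun h => ih ⟨z, hz, hzn⟩ (h2 h)⟩

theorem fresh_prefix {v : V} {w u : List ((v : V) × Γ v)}
    (h : Fresh G v (w ++ u)) : Fresh G v w := by
  induction w with
  | nil => trivial
  | cons l w ih =>
    obtain ⟨h1, h2⟩ := h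
    exact ⟨h1, fun h => ih (h2 h)⟩

theorem fresh_mid_blocker {v : V} {α β : List ((v : V) × Γ v)} {y : (v : V) × Γ v}
    (h : Fresh G v (α ++ y :: β)) (hy : y.1 = v) :
    ∃ z ∈ α, z.1 ≠ v ∧ ¬ G.Adj z.1 v := by
  induction α with
  | nil => exact absurd hy h.1
  | cons l α ih =>
    obtain ⟨h1, h2⟩ := h
    by_cases hadj : G.Adj l.1 v
    · obtain ⟨z, hz, hzp⟩ := ih (h2 hadj)
      exact ⟨z, List.mem_cons_of_mem _ hz, hzp⟩
    · exact ⟨l, List.mem_cons_self, h1, hadj⟩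

theorem not_fresh_decomp {v : V} {w : List ((v : V) × Γ v)} (h : ¬ Fresh G v w) :
    ∃ (α : List ((v : V) × Γ v)) (x : Γ v) (β : List ((v : V) × Γ v)),
      w = α ++ ⟨v, x⟩ :: β ∧ ∀ l ∈ α, G.Adj l.1 v := by
  induction w with
  | nil => exact absurd trivial h
  | cons l w ih =>
    by_cases h1 : l.1 = v
    · rcases l with ⟨t, x⟩
      obtain rfl : t = v := h1
      exact ⟨[], x, w, rfl, by simp⟩
    · have h2 : ¬ (G.Adj l.1 v → Fresh G v w) := fun hc => h ⟨h1, hc⟩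
      push_neg at h2
      obtain ⟨hadj, hnf⟩ := h2
      obtain ⟨α, x, β, rfl, hα⟩ := ih hnf
      refine ⟨l :: α, x, β, rfl, ?_⟩
      intro z hz
      rcases List.mem_cons.mp hz with rfl | hz
      · exact hadj
      · exact hα z hz

theorem fresh_tail {v : V} {l : (v : V) × Γ v} {w : List ((v : V) × Γ v)}
    (h : Fresh G v (l :: w)) (hadj : G.Adj l.1 v) : Fresh G v w := h.2 hadj

theorem red_append {w u : List ((v : V) × Γ v)} {S : Set V}
    (hw : Red G w) (hu : Red G u) (huS : ∀ l ∈ u, l.1 ∈ S)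
    (hR : ∀ t ∈ S, Fresh G t w.reverse) : Red G (w ++ u) := by
  induction w with
  | nil => exact hu
  | cons x w ih =>
    obtain ⟨h1, hfr, hred⟩ := hw
    have hRw : ∀ t ∈ S, Fresh G t w.reverse := by
      intro t ht
      have h2 := hR t ht
      rw [List.reverse_cons] at h2
      exact fresh_prefix h2
    refine ⟨h1, ?_, ih hred hRw⟩
    by_cases hfu : Fresh G x.1 u
    · exact fresh_append hfr hfu
    · obtain ⟨α, z, β, heq, _⟩ := not_fresh_decomp hfu
      have hxS : x.1 ∈ S := by
        have : (⟨x.1, z⟩ : (v : V) × Γ v) ∈ u := by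
          rw [heq]; exact List.mem_append_right _ (List.mem_cons_self)
        exact huS ⟨x.1, z⟩ this
      have h2 := hR x.1 hxS
      rw [List.reverse_cons] at h2
      obtain ⟨z₀, hz₀, _, hz₀n⟩ := fresh_mid_blocker (β := []) h2 rfl
      refine fresh_append_blocker ⟨z₀, ?_, hz₀n⟩ hfr
      exact List.mem_reverse.mp hz₀
    
end FreshLemmas

section Endgame

theorem eq_of_cons_eq_append {A : Type*} (x : A) :
    ∀ p : List A, x :: p = p ++ [x] → ∀ y ∈ p, y = x := by
  intro p
  induction p with
  | nil => intro _ y hy; exact absurd hy (List.not_mem_nil)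
  | cons z p ih =>
    intro h y hy
    rw [List.cons_append] at h
    injection h with h1 h2
    subst h1
    rcases List.mem_cons.mp hy with rfl | hy
    · rfl
    · exact ih h2 y hy

open scoped Classical in
theorem shuf_all_adj {s : V} {z : Γ s} {w : List ((v : V) × Γ v)}
    (hfr : Fresh G s w)
    (hsh : Shuf G (⟨s, z⟩ :: w) (w ++ [⟨s, z⟩])) :
    ∀ l ∈ w, G.Adj s l.1 := by
  have key : ∀ l₀ ∈ w, l₀.1 ≠ s → G.Adj s l₀.1 := by
    intro l₀ hl₀ hne
    by_contra hna
    have hpair : ∀ x y : (v : V) × Γ v, (x.1 = s ∨ x.1 = l₀.1) →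
        (y.1 = s ∨ y.1 = l₀.1) → ¬ G.Adj x.1 y.1 := by
      intro x y hx hy hadj
      rcases hx with h1 | h1 <;> rcases hy with h2 | h2 <;> rw [h1, h2] at hadj
      · exact G.irrefl hadj
      · exact hna hadj
      · exact hna hadj.symm
      · exact G.irrefl hadj
    have hfe := hsh.filter_eq (fun l => l.1 = s ∨ l.1 = l₀.1) hpair
    rw [List.filter_cons_of_pos (by simp), List.filter_append,
      List.filter_cons_of_pos (by simp), List.filter_nil] at hfe
    have hall := eq_of_cons_eq_append _ _ hfe
    have h2 := hall l₀ (List.mem_filter.mpr ⟨hl₀, by simp⟩)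
    exact hne (congrArg Sigma.fst h2)
  intro l hl
  by_cases hls : l.1 = s
  · exfalso
    obtain ⟨α, β, heq⟩ := List.append_of_mem hl
    rw [heq] at hfr
    obtain ⟨z₀, hz₀, hz₀ne, hz₀na⟩ := fresh_mid_blocker hfr hls
    have hz₀w : z₀ ∈ w := by rw [heq]; exact List.mem_append_left _ hz₀
    have h3 := key z₀ hz₀w hz₀ne
    exact hz₀na h3.symm
  · exact key l hl hls

end Endgame

section Main

theorem main_lemma [∀ v, Infinite (Γ v)] {S : Set V} (g : GraphProduct G Γ)
    (hfin : ((conjSub g (GraphProduct.full G Γ S)).subgroupOf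
      (GraphProduct.full G Γ S)).FiniteIndex) :
    g ∈ GraphProduct.full G Γ (S ∪ lkSet G S) := by
  classical
  set F := GraphProduct.full G Γ S with hF
  set D : Set (GraphProduct G Γ) := {x | ∃ a ∈ F, ∃ b ∈ F, x = a * g * b} with hD
  have hgD : g ∈ D := ⟨1, F.one_mem, 1, F.one_mem, by simp⟩
  have hne : (ell '' D).Nonempty := ⟨ell g, Set.mem_image_of_mem ell hgD⟩
  obtain ⟨m, hmD, hml⟩ := Nat.sInf_mem hne
  obtain ⟨a, ha, b, hb, hmab⟩ := hmD
  obtain ⟨wr, hwr⟩ := Quotient.exists_rep (nf m)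
  have hwred : Red G wr.1 := wr.2
  have hprw : pr (G := G) wr.1 = m := by
    have h2 := congrArg prQ hwr
    rwa [prQ_mk, prQ_nf] at h2
  have hlen : wr.1.length = ell m := by
    have h2 := congrArg lenQ hwr
    rwa [lenQ_mk] at h2
  -- minimality: no S-letter reachable from the left
  have hFreshL : ∀ t ∈ S, Fresh G t wr.1 := by
    intro t ht
    by_contra hnf
    obtain ⟨α, x, β, heqw, hα⟩ := not_fresh_decomp hnf
    have h1 : pr (G := G) wr.1 = GraphProduct.of (G := G) t x * pr (G := G) (α ++ β) := by
      rw [heqw]; exact pr_left_extract x hα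
    have hmeq : (GraphProduct.of (G := G) t x)⁻¹ * m = pr (G := G) (α ++ β) := by
      rw [← hprw, h1]; group
    have hm'D : (GraphProduct.of (G := G) t x)⁻¹ * m ∈ D := by
      refine ⟨(GraphProduct.of (G := G) t x)⁻¹ * a,
        F.mul_mem (F.inv_mem (of_mem_full ht x)) ha, b, hb, ?_⟩
      rw [hmab]; group
    have hlelt : ell ((GraphProduct.of (G := G) t x)⁻¹ * m) ≤ (α ++ β).length := by
      rw [hmeq]; exact ell_pr_le _
    have hlsum : (α ++ β).length + 1 = wr.1.length := by
      rw [heqw]; simp [List.length_append]; omega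
    have hge := Nat.sInf_le (Set.mem_image_of_mem ell hm'D)
    omega
  -- minimality: no S-letter reachable from the right
  have hFreshR : ∀ t ∈ S, Fresh G t wr.1.reverse := by
    intro t ht
    by_contra hnf
    obtain ⟨α, x, β, heqw, hα⟩ := not_fresh_decomp hnf
    have heqw2 : wr.1 = β.reverse ++ ⟨t, x⟩ :: α.reverse := by
      have h2 := congrArg List.reverse heqw
      rw [List.reverse_reverse] at h2
      rw [h2]
      simp
    have h1 : pr (G := G) wr.1 =
        pr (G := G) (β.reverse ++ α.reverse) * GraphProduct.of (G := G) t x := by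
      rw [heqw2]
      exact pr_right_extract x (fun l hl => hα l (List.mem_reverse.mp hl))
    have hmeq : m * (GraphProduct.of (G := G) t x)⁻¹ =
        pr (G := G) (β.reverse ++ α.reverse) := by
      rw [← hprw, h1]; group
    have hm'D : m * (GraphProduct.of (G := G) t x)⁻¹ ∈ D := by
      refine ⟨a, ha, b * (GraphProduct.of (G := G) t x)⁻¹,
        F.mul_mem hb (F.inv_mem (of_mem_full ht x)), ?_⟩
      rw [hmab]; group
    have hlelt : ell (m * (GraphProduct.of (G := G) t x)⁻¹) ≤
        (β.reverse ++ α.reverse).length := by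
      rw [hmeq]; exact ell_pr_le _
    have hlsum : (β.reverse ++ α.reverse).length + 1 = wr.1.length := by
      rw [heqw2]; simp [List.length_append]; omega
    have hge := Nat.sInf_le (Set.mem_image_of_mem ell hm'D)
    omega
  -- conjugation dichotomy from finite index
  have hconj : ∀ s, s ∈ S → ∃ z : Γ s, z ≠ 1 ∧
      m⁻¹ * GraphProduct.of (G := G) s z * m ∈ F := by
    intro s hs
    by_contra hc
    push_neg at hc
    set H := (conjSub g F).subgroupOf F with hH
    have helt : ∀ z : Γ s, a⁻¹ * GraphProduct.of (G := G) s z * a ∈ F := fun z =>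
      F.mul_mem (F.mul_mem (F.inv_mem ha) (of_mem_full hs z)) ha
    have hinj : Function.Injective
        (fun z : Γ s => (QuotientGroup.mk (⟨a⁻¹ * GraphProduct.of (G := G) s z * a,
          helt z⟩ : F) : F ⧸ H)) := by
      intro x y hxy
      simp only [QuotientGroup.eq] at hxy
      rw [Subgroup.mem_subgroupOf] at hxy
      have hco : ((((⟨a⁻¹ * GraphProduct.of (G := G) s x * a, helt x⟩ : F)⁻¹ *
          (⟨a⁻¹ * GraphProduct.of (G := G) s y * a, helt y⟩ : F) : F) : GraphProduct G Γ)) =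
          a⁻¹ * GraphProduct.of (G := G) s (x⁻¹ * y) * a := by
        rw [MulMemClass.coe_mul, InvMemClass.coe_inv]
        simp only [map_mul, map_inv]
        group
      rw [hco] at hxy
      obtain ⟨f, hf, heq⟩ := Subgroup.mem_map.mp hxy
      have heq2 : g * f * g⁻¹ = a⁻¹ * GraphProduct.of (G := G) s (x⁻¹ * y) * a := by
        rw [← heq]; rfl
      have hmm : m⁻¹ * GraphProduct.of (G := G) s (x⁻¹ * y) * m = b⁻¹ * f * b := by
        rw [hmab]
        have h3 : GraphProduct.of (G := G) s (x⁻¹ * y) = a * (g * f * g⁻¹) * a⁻¹ := by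
          rw [heq2]; group
        rw [h3]; group
      have hmmF : m⁻¹ * GraphProduct.of (G := G) s (x⁻¹ * y) * m ∈ F := by
        rw [hmm]
        exact F.mul_mem (F.mul_mem (F.inv_mem hb) hf) hb
      by_contra hne2
      have hxyne : x⁻¹ * y ≠ 1 := fun h => hne2 (inv_mul_eq_one.mp h)
      exact hc (x⁻¹ * y) hxyne hmmF
    have : Infinite (F ⧸ H) := Infinite.of_injective _ hinj
    exact hfin.index_ne_zero (by
      rw [Subgroup.index]
      exact Nat.card_eq_zero_of_infinite)
  -- per-vertex adjacency of all letters of w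
  have hadjall : ∀ s, s ∈ S → ∀ l ∈ wr.1, G.Adj s l.1 := by
    intro s hs
    obtain ⟨z, hz, hzm⟩ := hconj s hs
    set c := m⁻¹ * GraphProduct.of (G := G) s z * m with hcdef
    have hc1 : c ≠ 1 := by
      intro h
      refine of_ne_one (G := G) hz ?_
      have : GraphProduct.of (G := G) s z = m * c * m⁻¹ := by rw [hcdef]; group
      rw [this, h]; group
    obtain ⟨ur, hur⟩ := Quotient.exists_rep (nf c)
    have hpru : pr (G := G) ur.1 = c := by
      have h2 := congrArg prQ hur
      rwa [prQ_mk, prQ_nf] at h2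
    have huS : ∀ l ∈ ur.1, l.1 ∈ S := by
      have h2 := vertsIn_nf_of_mem_full (U := S) hzm
      rw [← hur] at h2
      exact h2
    have hredwu : Red G (wr.1 ++ ur.1) := red_append hwred ur.2 huS hFreshR
    have hredzw : Red G (⟨s, z⟩ :: wr.1) := ⟨hz, hFreshL s hs, hwred⟩
    have e1 : nf (GraphProduct.of (G := G) s z * m) = ⟦⟨⟨s, z⟩ :: wr.1, hredzw⟩⟧ := by
      rw [nf_mul_of, ← hwr, actQ_mk]
      exact Quotient.sound (shuf_act_prepend hz (hFreshL s hs))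
    have e2 : nf (m * c) = ⟦⟨wr.1 ++ ur.1, hredwu⟩⟧ := by
      rw [← hprw, ← hpru, ← pr_append]
      exact nf_uniq _ hredwu
    have hzmeq : GraphProduct.of (G := G) s z * m = m * c := by rw [hcdef]; group
    have e3 : Shuf G (⟨s, z⟩ :: wr.1) (wr.1 ++ ur.1) := by
      have h4 : (⟦⟨⟨s, z⟩ :: wr.1, hredzw⟩⟧ : NF G Γ) = ⟦⟨wr.1 ++ ur.1, hredwu⟩⟧ := by
        rw [← e1, ← e2, hzmeq]
      exact Quotient.exact h4
    have hlen1 : ur.1.length = 1 := by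
      have h4 := e3.length_eq
      simp only [List.length_cons, List.length_append] at h4
      omega
    obtain ⟨l₀, hl₀⟩ := List.length_eq_one_iff.mp hlen1
    have hperm := e3.perm
    rw [hl₀] at hperm
    have hperm2 : (⟨s, z⟩ :: wr.1).Perm (l₀ :: wr.1) :=
      hperm.trans (List.perm_append_singleton _ _)
    have hl₀eq : l₀ = ⟨s, z⟩ := by
      have hcount := hperm2.count_eq ⟨s, z⟩
      by_contra hne3
      rw [List.count_cons_self, List.count_cons_of_ne hne3] at hcount
      omega
    rw [hl₀eq] at hl₀
    rw [hl₀] at e3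
    exact shuf_all_adj (hFreshL s hs) e3
  -- conclude
  have hverts : ∀ l ∈ wr.1, l.1 ∈ lkSet G S := by
    intro l hl
    rw [lkSet, Set.mem_iInter₂]
    intro s hs
    exact hadjall s hs l hl
  have hmfull : m ∈ GraphProduct.full G Γ (lkSet G S) := by
    rw [← hprw]
    exact pr_mem_full hverts
  have hg : g = a⁻¹ * m * b⁻¹ := by rw [hmab]; group
  rw [hg]
  exact Subgroup.mul_mem _
    (Subgroup.mul_mem _
      (Subgroup.inv_mem _ (full_mono Set.subset_union_left ha))
      (full_mono Set.subset_union_right hmfull))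
    (Subgroup.inv_mem _ (full_mono Set.subset_union_left hb))

end Main

end GPAux

/-- If `Γ_𝒮 ∩ g Γ_𝒮 g⁻¹` has finite index in `Γ_𝒮` then `g ∈ Γ_{𝒮 ∪ lk(𝒮)}`;
consequently the quasi-normalizer of `Γ_𝒮` is contained in `Γ_{𝒮 ∪ lk(𝒮)}`. -/
theorem stmt_4 {V : Type*} [Fintype V] (G : SimpleGraph V) (Γ : V → Type*)
    [∀ v, Group (Γ v)] [∀ v, Infinite (Γ v)] (S : Set V) (g : GraphProduct G Γ)
    (hfin : ((conjSub g (GraphProduct.full G Γ S)).subgroupOf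
      (GraphProduct.full G Γ S)).FiniteIndex) :
    g ∈ GraphProduct.full G Γ (S ∪ lkSet G S) ∧
      ∀ g' : GraphProduct G Γ,
        ((conjSub g' (GraphProduct.full G Γ S)).subgroupOf
            (GraphProduct.full G Γ S)).FiniteIndex →
        ((conjSub g'⁻¹ (GraphProduct.full G Γ S)).subgroupOf
            (GraphProduct.full G Γ S)).FiniteIndex →
        g' ∈ GraphProduct.full G Γ (S ∪ lkSet G S) := by
  exact ⟨GPAux.main_lemma g hfin, fun g' h1 _ => GPAux.main_lemma g' h1⟩
end

section
/- Let 𝒢 be a graph in class CC₁ with consecutive clique enumeration 𝒞₁, ..., 𝒞ₙ (n ≥ 4), and let Γ = 𝒢{Γ_v} be a graph product of groups. Then Γ is isomorphic to the graph product over the flower graph 𝒯ₙ (the simple cycle of n triangles, with outer petal vertices w₁,...,wₙ and base vertices b₁,...,bₙ) where the vertex group at wᵢ is the direct sum ⊕_{v ∈ 𝒞ᵢ^int} Γ_v and the vertex group at bᵢ is ⊕_{v ∈ 𝒞_{i-1,i}} Γ_v. -/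
open Monoid

variable {V : Type*}

/-- A consecutive enumeration of the cliques of a graph in class `CC₁`:
the cliques are `C 1, ..., C n` (indexed by `ZMod n`, `n ≥ 4`), consecutive cliques
intersect nontrivially, non-consecutive ones are disjoint, and each clique has a
nonempty interior `C i \ (C (i-1) ∪ C (i+1))`. -/
structure ConsecutiveCliques {V : Type*} (G : SimpleGraph V) (n : ℕ) where
  C : ZMod n → Set V
  four_le : 4 ≤ n
  isClique : ∀ i, G.IsClique (C i)
  isMaximal : ∀ i, ∀ s : Set V, G.IsClique s → C i ⊆ s → s = C i
  cliques_covered : ∀ s : Set V, G.IsClique s →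
    (∀ t : Set V, G.IsClique t → s ⊆ t → t = s) → ∃ i, s = C i
  inj : Function.Injective C
  inter_empty : ∀ i j : ZMod n, i ≠ j → i ≠ j + 1 → j ≠ i + 1 → C i ∩ C j = ∅
  inter_nonempty : ∀ i, (C i ∩ C (i + 1)).Nonempty
  int_nonempty : ∀ i, (C i \ (C (i - 1) ∪ C (i + 1))).Nonempty

/-- The flower graph `𝒯ₙ`: a simple cycle of `n` triangles, with base vertices
`Sum.inl i` forming an `n`-cycle and petal vertices `Sum.inr i` joined to the bases
`Sum.inl i` and `Sum.inl (i+1)`. -/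
def flower (n : ℕ) : SimpleGraph (ZMod n ⊕ ZMod n) :=
  SimpleGraph.fromRel (fun x y =>
    (∃ i : ZMod n, x = Sum.inl i ∧ y = Sum.inl (i + 1)) ∨
    (∃ i : ZMod n, x = Sum.inr i ∧ (y = Sum.inl i ∨ y = Sum.inl (i + 1))))

/-- The vertex groups on the flower graph: the petal vertex `wᵢ = Sum.inr i` carries the
direct sum of the vertex groups over `𝒞ᵢ^int`, and the base vertex `bᵢ = Sum.inl i`
carries the direct sum over `𝒞_{i-1,i}`. -/
def flowerGroups {V : Type*} {G : SimpleGraph V} {n : ℕ} (cc : ConsecutiveCliques G n)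
    (Γ : V → Type*) [∀ v, Group (Γ v)] : ZMod n ⊕ ZMod n → Type _
  | Sum.inl i => ∀ v : ↥(cc.C (i - 1) ∩ cc.C i), Γ v
  | Sum.inr i => ∀ v : ↥(cc.C i \ (cc.C (i - 1) ∪ cc.C (i + 1))), Γ v

instance {V : Type*} {G : SimpleGraph V} {n : ℕ} (cc : ConsecutiveCliques G n)
    (Γ : V → Type*) [∀ v, Group (Γ v)] : ∀ x, Group (flowerGroups cc Γ x)
  | Sum.inl _ => Pi.group
  | Sum.inr _ => Pi.group

open scoped Classical
open scoped commutatorElement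

theorem GraphProduct.of_commute {V : Type*} {G : SimpleGraph V} {Γ : V → Type*}
    [∀ v, Group (Γ v)] {u w : V} (h : G.Adj u w) (a : Γ u) (b : Γ w) :
    Commute (GraphProduct.of (G := G) u a) (GraphProduct.of (G := G) w b) := by
  rw [← commutatorElement_eq_one_iff_commute]
  have hmem : ⁅(CoprodI.of a : CoprodI Γ), CoprodI.of b⁆ ∈
      Subgroup.normalClosure (graphProdRels G Γ) := by
    rw [commutatorElement_def]
    exact Subgroup.subset_normalClosure ⟨u, w, a, b, h, rfl⟩
  exact (map_commutatorElement
      (QuotientGroup.mk' (Subgroup.normalClosure (graphProdRels G Γ)))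
      (CoprodI.of a) (CoprodI.of b)).symm.trans ((QuotientGroup.eq_one_iff _).mpr hmem)

/-- Universal property of the graph product. -/
def GraphProduct.lift {V : Type*} {G : SimpleGraph V} {Γ : V → Type*}
    [∀ v, Group (Γ v)] {M : Type*} [Group M] (f : ∀ v, Γ v →* M)
    (hf : ∀ u w, G.Adj u w → ∀ a b, Commute (f u a) (f w b)) :
    GraphProduct G Γ →* M :=
  QuotientGroup.lift _ (Monoid.CoprodI.lift f) (by
    apply Subgroup.normalClosure_le_normal
    rintro x ⟨u, w, a, b, hadj, rfl⟩
    simp only [SetLike.mem_coe, MonoidHom.mem_ker, map_mul, map_inv, CoprodI.lift_of]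
    rw [← commutatorElement_def, commutatorElement_eq_one_iff_commute]
    exact hf u w hadj a b)

theorem GraphProduct.lift_of {V : Type*} {G : SimpleGraph V} {Γ : V → Type*}
    [∀ v, Group (Γ v)] {M : Type*} [Group M] (f : ∀ v, Γ v →* M)
    (hf : ∀ u w, G.Adj u w → ∀ a b, Commute (f u a) (f w b)) (v : V) (a : Γ v) :
    GraphProduct.lift f hf (GraphProduct.of v a) = f v a := by
  have h1 : GraphProduct.lift f hf (GraphProduct.of v a)
      = Monoid.CoprodI.lift f (CoprodI.of a) := rfl
  rw [h1, CoprodI.lift_of]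

theorem GraphProduct.hom_ext {V : Type*} {G : SimpleGraph V} {Γ : V → Type*}
    [∀ v, Group (Γ v)] {M : Type*} [Group M] {f g : GraphProduct G Γ →* M}
    (h : ∀ v, f.comp (GraphProduct.of v) = g.comp (GraphProduct.of v)) : f = g := by
  apply QuotientGroup.monoidHom_ext
  apply Monoid.CoprodI.ext_hom
  intro v
  show f.comp (GraphProduct.of v) = g.comp (GraphProduct.of v)
  exact h v

namespace ConsecutiveCliques

variable {V : Type*} {n : ℕ} {G : SimpleGraph V} (cc : ConsecutiveCliques G n)

theorem natCast_ne_zero_aux (k : ℕ) (h0 : 0 < k) (hk : k < n) : (k : ZMod n) ≠ 0 := by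
  intro h
  rw [ZMod.natCast_eq_zero_iff] at h
  have := Nat.le_of_dvd h0 h
  omega

theorem one_ne (cc : ConsecutiveCliques G n) : (1 : ZMod n) ≠ 0 := by
  have h := natCast_ne_zero_aux (n := n) 1 one_pos (by have := cc.four_le; omega)
  simpa using h

theorem two_ne (cc : ConsecutiveCliques G n) : (2 : ZMod n) ≠ 0 := by
  have h := natCast_ne_zero_aux (n := n) 2 (by omega) (by have := cc.four_le; omega)
  simpa using h

theorem three_ne (cc : ConsecutiveCliques G n) : (3 : ZMod n) ≠ 0 := by
  have h := natCast_ne_zero_aux (n := n) 3 (by omega) (by have := cc.four_le; omega)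
  simpa using h

theorem inter_cases {i k : ZMod n} (h : (cc.C i ∩ cc.C k).Nonempty) :
    k = i ∨ k = i + 1 ∨ i = k + 1 := by
  by_contra hc
  push_neg at hc
  obtain ⟨h1, h2, h3⟩ := hc
  rw [cc.inter_empty i k (fun he => h1 he.symm) h3 h2] at h
  exact Set.not_nonempty_empty h

theorem mem_cases {i k : ZMod n} {v : V} (hi : v ∈ cc.C i) (hk : v ∈ cc.C k) :
    k = i ∨ k = i + 1 ∨ i = k + 1 :=
  cc.inter_cases ⟨v, hi, hk⟩

/-- The pieces of the vertex set indexed by flower-graph vertices. -/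
def piece : ZMod n ⊕ ZMod n → Set V
  | Sum.inl i => cc.C (i - 1) ∩ cc.C i
  | Sum.inr i => cc.C i \ (cc.C (i - 1) ∪ cc.C (i + 1))

theorem piece_cases {v : V} {x : ZMod n ⊕ ZMod n} {k : ZMod n}
    (hx : v ∈ cc.piece x) (hk : v ∈ cc.C k) :
    x = Sum.inl k ∨ x = Sum.inl (k + 1) ∨ x = Sum.inr k := by
  have h1 := cc.one_ne; have h2 := cc.two_ne; have h3 := cc.three_ne
  match x with
  | Sum.inl i =>
    obtain ⟨ha, hb⟩ := hx
    rcases cc.mem_cases hb hk with rfl | h | h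
    · exact Or.inl rfl
    · subst h
      rcases cc.mem_cases ha hk with he | he | he
      · exact absurd (show (2 : ZMod n) = 0 by linear_combination he) h2
      · exact absurd (show (1 : ZMod n) = 0 by linear_combination he) h1
      · exact absurd (show (3 : ZMod n) = 0 by linear_combination -he) h3
    · exact Or.inr (Or.inl (by rw [h]))
  | Sum.inr i =>
    obtain ⟨ha, hb⟩ := hx
    rcases cc.mem_cases ha hk with rfl | h | h
    · exact Or.inr (Or.inr rfl)
    · subst h
      exact absurd (Set.mem_union_right _ hk) hb
    · have he : k = i - 1 := by linear_combination -h
      exact absurd (Set.mem_union_left _ (he ▸ hk)) hb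

theorem piece_disjoint {x y : ZMod n ⊕ ZMod n} {v : V} (hxy : x ≠ y)
    (hx : v ∈ cc.piece x) (hy : v ∈ cc.piece y) : False := by
  have h1 := cc.one_ne; have h2 := cc.two_ne; have h3 := cc.three_ne
  match x with
  | Sum.inl i =>
    obtain ⟨ha, hb⟩ := hx
    rcases cc.piece_cases hy hb with rfl | rfl | rfl
    · exact hxy rfl
    · rcases cc.piece_cases hy ha with he | he | he
      · exact h2 (by linear_combination Sum.inl.inj he)
      · exact h1 (by linear_combination Sum.inl.inj he)
      · exact Sum.inl_ne_inr he
    · rcases cc.piece_cases hy ha with he | he | he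
      · exact (Sum.inr_ne_inl he).elim
      · exact (Sum.inr_ne_inl he).elim
      · exact h1 (by linear_combination Sum.inr.inj he)
  | Sum.inr i =>
    obtain ⟨ha, hb⟩ := hx
    rcases cc.piece_cases hy ha with rfl | rfl | rfl
    · -- y = Sum.inl i : v ∈ C (i-1) ∩ C i
      exact hb (Set.mem_union_left _ hy.1)
    · -- y = Sum.inl (i+1) : v ∈ C (i+1-1) ∩ C (i+1)
      exact hb (Set.mem_union_right _ hy.2)
    · exact hxy rfl

theorem exists_max_clique {V : Type*} [Fintype V] (G : SimpleGraph V) {s : Set V}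
    (hs : G.IsClique s) :
    ∃ t, G.IsClique t ∧ s ⊆ t ∧ ∀ t', G.IsClique t' → t ⊆ t' → t' = t := by
  have hfin : {t : Set V | G.IsClique t ∧ s ⊆ t}.Finite := Set.toFinite _
  obtain ⟨t, ⟨ht, hst⟩, hmax⟩ :=
    Set.Finite.exists_maximalFor id _ hfin ⟨s, hs, subset_rfl⟩
  exact ⟨t, ht, hst, fun t' ht' htt' => le_antisymm (hmax ⟨ht', hst.trans htt'⟩ htt') htt'⟩

theorem exists_piece [Fintype V] (v : V) : ∃ x, v ∈ cc.piece x := by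
  obtain ⟨t, ht, hst, hmax⟩ := exists_max_clique G (G.isClique_singleton v)
  obtain ⟨k, rfl⟩ := cc.cliques_covered t ht hmax
  have hv : v ∈ cc.C k := hst rfl
  by_cases hm : v ∈ cc.C (k - 1)
  · exact ⟨Sum.inl k, hm, hv⟩
  by_cases hp : v ∈ cc.C (k + 1)
  · refine ⟨Sum.inl (k + 1), ?_, hp⟩
    show v ∈ cc.C (k + 1 - 1)
    rwa [add_sub_cancel_right]
  · refine ⟨Sum.inr k, hv, ?_⟩
    intro h
    rcases h with h | h
    exacts [hm h, hp h]

noncomputable def idx [Fintype V] (v : V) : ZMod n ⊕ ZMod n :=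
  (cc.exists_piece v).choose

theorem mem_piece_idx [Fintype V] (v : V) : v ∈ cc.piece (cc.idx v) :=
  (cc.exists_piece v).choose_spec

theorem idx_eq [Fintype V] {v : V} {x : ZMod n ⊕ ZMod n} (h : v ∈ cc.piece x) :
    cc.idx v = x := by
  by_contra hne
  exact cc.piece_disjoint hne (cc.mem_piece_idx v) h

theorem piece_isClique (x : ZMod n ⊕ ZMod n) : G.IsClique (cc.piece x) := by
  match x with
  | Sum.inl i => exact SimpleGraph.IsClique.subset Set.inter_subset_right (cc.isClique i)
  | Sum.inr i => exact SimpleGraph.IsClique.subset Set.diff_subset (cc.isClique i)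

theorem adj_of_same_piece {x : ZMod n ⊕ ZMod n} {u w : V} (hu : u ∈ cc.piece x)
    (hw : w ∈ cc.piece x) (hne : u ≠ w) : G.Adj u w :=
  cc.piece_isClique x hu hw hne

theorem flower_adj_inl (cc : ConsecutiveCliques G n) (i : ZMod n) :
    (flower n).Adj (Sum.inl i) (Sum.inl (i + 1)) := by
  rw [flower, SimpleGraph.fromRel_adj]
  refine ⟨?_, Or.inl (Or.inl ⟨i, rfl, rfl⟩)⟩
  intro h
  exact cc.one_ne (by linear_combination -(Sum.inl.inj h))

theorem flower_adj_inr_left (i : ZMod n) :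
    (flower n).Adj (Sum.inr i) (Sum.inl i) := by
  rw [flower, SimpleGraph.fromRel_adj]
  exact ⟨Sum.inr_ne_inl, Or.inl (Or.inr ⟨i, rfl, Or.inl rfl⟩)⟩

theorem flower_adj_inr_right (i : ZMod n) :
    (flower n).Adj (Sum.inr i) (Sum.inl (i + 1)) := by
  rw [flower, SimpleGraph.fromRel_adj]
  exact ⟨Sum.inr_ne_inl, Or.inl (Or.inr ⟨i, rfl, Or.inr rfl⟩)⟩

theorem flower_adj_of_adj [Fintype V] {u w : V} {x y : ZMod n ⊕ ZMod n}
    (h : G.Adj u w) (hu : u ∈ cc.piece x) (hw : w ∈ cc.piece y) (hxy : x ≠ y) :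
    (flower n).Adj x y := by
  have hcl : G.IsClique {u, w} := by
    intro a ha b hb hab
    simp only [Set.mem_insert_iff, Set.mem_singleton_iff] at ha hb
    rcases ha with rfl | rfl <;> rcases hb with rfl | rfl <;>
      first | exact h | exact h.symm | exact absurd rfl hab
  obtain ⟨t, ht, hst, hmax⟩ := exists_max_clique G hcl
  obtain ⟨k, rfl⟩ := cc.cliques_covered t ht hmax
  have hu' : u ∈ cc.C k := hst (by simp)
  have hw' : w ∈ cc.C k := hst (by simp)
  rcases cc.piece_cases hu hu' with rfl | rfl | rfl <;>
    rcases cc.piece_cases hw hw' with rfl | rfl | rfl <;>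
    first
      | exact absurd rfl hxy
      | exact cc.flower_adj_inl k
      | exact (cc.flower_adj_inl k).symm
      | exact flower_adj_inr_left (n := n) k
      | exact (flower_adj_inr_left (n := n) k).symm
      | exact flower_adj_inr_right (n := n) k
      | exact (flower_adj_inr_right (n := n) k).symm

theorem adj_of_rel {x y : ZMod n ⊕ ZMod n} {u w : V}
    (hrel : (∃ i : ZMod n, x = Sum.inl i ∧ y = Sum.inl (i + 1)) ∨
      (∃ i : ZMod n, x = Sum.inr i ∧ (y = Sum.inl i ∨ y = Sum.inl (i + 1))))
    (hu : u ∈ cc.piece x) (hw : w ∈ cc.piece y) : G.Adj u w := by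
  have h1 := cc.one_ne; have h2 := cc.two_ne; have h3 := cc.three_ne
  rcases hrel with ⟨i, rfl, rfl⟩ | ⟨i, rfl, rfl | rfl⟩
  · obtain ⟨hu1, hu2⟩ := hu
    obtain ⟨hw1, hw2⟩ := hw
    rw [add_sub_cancel_right] at hw1
    refine cc.isClique i hu2 hw1 ?_
    rintro rfl
    rcases cc.mem_cases hu1 hw2 with he | he | he
    · exact h2 (by linear_combination he)
    · exact h1 (by linear_combination he)
    · exact h3 (by linear_combination -he)
  · refine cc.isClique i hu.1 hw.2 ?_
    rintro rfl
    exact hu.2 (Set.mem_union_left _ hw.1)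
  · have hw1 : w ∈ cc.C i := by
      have h' := hw.1
      rwa [add_sub_cancel_right] at h'
    refine cc.isClique i hu.1 hw1 ?_
    rintro rfl
    exact hu.2 (Set.mem_union_right _ hw.2)

theorem adj_of_flower_adj {x y : ZMod n ⊕ ZMod n} {u w : V}
    (hadj : (flower n).Adj x y) (hu : u ∈ cc.piece x) (hw : w ∈ cc.piece y) :
    G.Adj u w := by
  rw [flower, SimpleGraph.fromRel_adj] at hadj
  obtain ⟨hne, hrel | hrel⟩ := hadj
  · exact cc.adj_of_rel hrel hu hw
  · exact (cc.adj_of_rel hrel hw hu).symm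

end ConsecutiveCliques

namespace ConsecutiveCliques

variable {V : Type*} {n : ℕ} {G : SimpleGraph V} (cc : ConsecutiveCliques G n)
variable (Γ : V → Type*) [∀ v, Group (Γ v)]

/-- The vertex group of the flower graph at `x` is (definitionally) the direct product of
the groups `Γ v` for `v` in the corresponding piece. -/
def pieceEquiv : ∀ x : ZMod n ⊕ ZMod n,
    (∀ v : ↥(cc.piece x), Γ v.1) ≃* flowerGroups cc Γ x
  | Sum.inl _ => MulEquiv.refl _
  | Sum.inr _ => MulEquiv.refl _

theorem piece_pairwise_commute (x : ZMod n ⊕ ZMod n) :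
    Pairwise fun (v v' : ↥(cc.piece x)) => ∀ (a : Γ v.1) (b : Γ v'.1),
      Commute (GraphProduct.of (G := G) v.1 a) (GraphProduct.of (G := G) v'.1 b) :=
  fun v v' hne a b =>
    GraphProduct.of_commute
      (cc.adj_of_same_piece v.2 v'.2 (fun h => hne (Subtype.ext h))) a b

noncomputable instance fintypePiece [Fintype V] (x : ZMod n ⊕ ZMod n) :
    Fintype ↥(cc.piece x) :=
  Fintype.ofFinite _

/-- The backward homomorphism on vertex groups. -/
noncomputable def bwdHom [Fintype V] (x : ZMod n ⊕ ZMod n) :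
    flowerGroups cc Γ x →* GraphProduct G Γ :=
  (MonoidHom.noncommPiCoprod (fun v : ↥(cc.piece x) => GraphProduct.of (G := G) v.1)
      (cc.piece_pairwise_commute Γ x)).comp (cc.pieceEquiv Γ x).symm.toMonoidHom

theorem commute_coprod {M : Type*} [Group M] {ι : Type*} [Fintype ι] {N : ι → Type*}
    [∀ i, Group (N i)] (ϕ : ∀ i, N i →* M)
    {hcomm : Pairwise fun i j => ∀ a b, Commute (ϕ i a) (ϕ j b)} (m : M)
    (h : ∀ i a, Commute m (ϕ i a)) (f : ∀ i, N i) :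
    Commute m (MonoidHom.noncommPiCoprod ϕ hcomm f) := by
  show Commute m (Finset.univ.noncommProd (fun i => ϕ i (f i))
    (fun _ _ _ _ hij => hcomm hij _ _))
  exact Finset.noncommProd_commute _ _ _ _ (fun i _ => h i (f i))

/-- The backward homomorphism. -/
noncomputable def bwd [Fintype V] :
    GraphProduct (flower n) (flowerGroups cc Γ) →* GraphProduct G Γ :=
  GraphProduct.lift (cc.bwdHom Γ) (by
    intro x y hadj a b
    show Commute
      (MonoidHom.noncommPiCoprod (fun v : ↥(cc.piece x) => GraphProduct.of (G := G) v.1)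
        (cc.piece_pairwise_commute Γ x) ((cc.pieceEquiv Γ x).symm a))
      (MonoidHom.noncommPiCoprod (fun v : ↥(cc.piece y) => GraphProduct.of (G := G) v.1)
        (cc.piece_pairwise_commute Γ y) ((cc.pieceEquiv Γ y).symm b))
    refine commute_coprod _ _ ?_ _
    intro w' b'
    refine Commute.symm (commute_coprod _ _ ?_ _)
    intro v a'
    exact (GraphProduct.of_commute (cc.adj_of_flower_adj hadj v.2 w'.2) a' b').symm)

theorem bwd_of [Fintype V] (x : ZMod n ⊕ ZMod n) (s : flowerGroups cc Γ x) :
    cc.bwd Γ (GraphProduct.of x s) =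
      MonoidHom.noncommPiCoprod (fun v : ↥(cc.piece x) => GraphProduct.of (G := G) v.1)
        (cc.piece_pairwise_commute Γ x) ((cc.pieceEquiv Γ x).symm s) :=
  GraphProduct.lift_of _ _ _ _

theorem fwd_commute_aux [Fintype V] {u w : V} {x y : ZMod n ⊕ ZMod n}
    (h : G.Adj u w) (hu : u ∈ cc.piece x) (hw : w ∈ cc.piece y) (a : Γ u) (b : Γ w) :
    Commute
      (GraphProduct.of (G := flower n) x (cc.pieceEquiv Γ x (Pi.mulSingle ⟨u, hu⟩ a)))
      (GraphProduct.of (G := flower n) y (cc.pieceEquiv Γ y (Pi.mulSingle ⟨w, hw⟩ b))) := by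
  by_cases hxy : x = y
  · subst hxy
    have hne : (⟨u, hu⟩ : ↥(cc.piece x)) ≠ ⟨w, hw⟩ :=
      fun he => h.ne (congrArg Subtype.val he)
    have hc : Commute (Pi.mulSingle (M := fun v : ↥(cc.piece x) => Γ v.1) ⟨u, hu⟩ a)
        (Pi.mulSingle ⟨w, hw⟩ b) :=
      @Pi.mulSingle_commute ↥(cc.piece x) (fun v => Γ v.1) _ (fun v => inferInstance)
        ⟨u, hu⟩ ⟨w, hw⟩ hne a b
    have hm := hc.map
      ((GraphProduct.of (G := flower n) x).comp (cc.pieceEquiv Γ x).toMonoidHom)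
    simpa using hm
  · exact GraphProduct.of_commute (cc.flower_adj_of_adj h hu hw hxy) _ _

end ConsecutiveCliques

namespace ConsecutiveCliques

variable {V : Type*} {n : ℕ} {G : SimpleGraph V} (cc : ConsecutiveCliques G n)
variable (Γ : V → Type*) [∀ v, Group (Γ v)]

/-- The forward homomorphism. -/
noncomputable def fwd [Fintype V] :
    GraphProduct G Γ →* GraphProduct (flower n) (flowerGroups cc Γ) :=
  GraphProduct.lift
    (fun v => (GraphProduct.of (G := flower n) (cc.idx v)).comp
      ((cc.pieceEquiv Γ (cc.idx v)).toMonoidHom.comp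
        (MonoidHom.mulSingle (fun u : ↥(cc.piece (cc.idx v)) => Γ u.1)
          ⟨v, cc.mem_piece_idx v⟩)))
    (fun u w h a b =>
      cc.fwd_commute_aux Γ h (cc.mem_piece_idx u) (cc.mem_piece_idx w) a b)

theorem fwd_over [Fintype V] {u : V} {x : ZMod n ⊕ ZMod n} (hu : u ∈ cc.piece x)
    (a : Γ u) :
    cc.fwd Γ (GraphProduct.of u a) =
      GraphProduct.of (G := flower n) x (cc.pieceEquiv Γ x (Pi.mulSingle ⟨u, hu⟩ a)) := by
  have hx := cc.idx_eq hu
  subst hx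
  exact GraphProduct.lift_of _ _ _ _

theorem fwd_bwd_single [Fintype V] (x : ZMod n ⊕ ZMod n) (u : ↥(cc.piece x))
    (g : Γ u.1) :
    cc.fwd Γ (cc.bwd Γ (GraphProduct.of (G := flower n) x
        (cc.pieceEquiv Γ x (Pi.mulSingle u g)))) =
      GraphProduct.of (G := flower n) x (cc.pieceEquiv Γ x (Pi.mulSingle u g)) := by
  rw [cc.bwd_of, MulEquiv.symm_apply_apply, MonoidHom.noncommPiCoprod_mulSingle]
  exact cc.fwd_over Γ u.2 g

end ConsecutiveCliques


/-- A graph product over a `CC₁` graph is isomorphic to the graph product over the flower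
graph `𝒯ₙ` with the indicated direct sums of vertex groups as new vertex groups. -/
theorem stmt_7 {V : Type*} [Fintype V] (G : SimpleGraph V) (Γ : V → Type*)
    [∀ v, Group (Γ v)] {n : ℕ} (cc : ConsecutiveCliques G n) :
    Nonempty (GraphProduct G Γ ≃* GraphProduct (flower n) (flowerGroups cc Γ)) := by
  refine ⟨MonoidHom.toMulEquiv (cc.fwd Γ) (cc.bwd Γ) ?_ ?_⟩
  · apply GraphProduct.hom_ext
    intro v
    ext a
    simp only [MonoidHom.comp_apply, MonoidHom.id_apply]
    rw [cc.fwd_over Γ (cc.mem_piece_idx v) a, cc.bwd_of, MulEquiv.symm_apply_apply,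
      MonoidHom.noncommPiCoprod_mulSingle]
  · apply GraphProduct.hom_ext
    intro x
    rcases x with i | i
    · refine MonoidHom.pi_ext fun u g => ?_
      exact cc.fwd_bwd_single Γ (Sum.inl i) u g
    · refine MonoidHom.pi_ext fun u g => ?_
      exact cc.fwd_bwd_single Γ (Sum.inr i) u g
end

section
/- Let Γ = 𝒢{Γ_v} be a graph product of groups over a finite simple graph and let 𝒞₁, 𝒞₂ be two disjoint cliques of 𝒢 (𝒞₁ ∩ 𝒞₂ = ∅). Then for any g ∈ Γ, the intersection Γ_{𝒞₁} ∩ g Γ_{𝒞₂} g⁻¹ is trivial. -/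
open Monoid Classical

variable {V : Type*}

/-- The retraction of the graph product killing all vertex groups outside `S`. -/
noncomputable def GraphProduct.retr (G : SimpleGraph V) (Γ : V → Type*) [∀ v, Group (Γ v)]
    (S : Set V) : GraphProduct G Γ →* GraphProduct G Γ :=
  QuotientGroup.lift _
    (CoprodI.lift (fun v => if v ∈ S then GraphProduct.of (G := G) v else 1)) <| by
  apply Subgroup.normalClosure_le_normal
  rintro x ⟨u, w, a, b, hadj, rfl⟩
  simp only [SetLike.mem_coe, MonoidHom.mem_ker, map_mul, map_inv, CoprodI.lift_of]
  set A : GraphProduct G Γ := (if u ∈ S then GraphProduct.of (G := G) u else 1) a with hA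
  set B : GraphProduct G Γ := (if w ∈ S then GraphProduct.of (G := G) w else 1) b with hB
  suffices h : A * B = B * A by
    rw [h]; group
  by_cases hu : u ∈ S
  · by_cases hw : w ∈ S
    · rw [hA, hB, if_pos hu, if_pos hw]
      have : ((GraphProduct.of (G := G) u a * GraphProduct.of (G := G) w b *
          (GraphProduct.of (G := G) u a)⁻¹ * (GraphProduct.of (G := G) w b)⁻¹ :
          GraphProduct G Γ)) = 1 := by
        show (QuotientGroup.mk' (Subgroup.normalClosure (graphProdRels G Γ)))
          (CoprodI.of a * CoprodI.of b * (CoprodI.of a)⁻¹ * (CoprodI.of b)⁻¹) = 1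
        rw [QuotientGroup.mk'_apply, QuotientGroup.eq_one_iff]
        exact Subgroup.subset_normalClosure ⟨u, w, a, b, hadj, rfl⟩
      have h2 := mul_eq_one_iff_eq_inv.mp this
      calc GraphProduct.of (G := G) u a * GraphProduct.of w b
          = (GraphProduct.of (G := G) u a * GraphProduct.of w b *
            (GraphProduct.of (G := G) u a)⁻¹) * GraphProduct.of u a := by group
        _ = GraphProduct.of (G := G) w b * GraphProduct.of u a := by rw [h2]; group
    · rw [hB, if_neg hw]; simp
  · rw [hA, if_neg hu]; simp

lemma GraphProduct.retr_of {G : SimpleGraph V} {Γ : V → Type*} [∀ v, Group (Γ v)]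
    {S : Set V} (v : V) (a : Γ v) :
    GraphProduct.retr G Γ S (GraphProduct.of v a) =
      (if v ∈ S then GraphProduct.of (G := G) v else 1) a := by
  show GraphProduct.retr G Γ S
    ((QuotientGroup.mk' (Subgroup.normalClosure (graphProdRels G Γ))) (CoprodI.of a)) = _
  rw [GraphProduct.retr, QuotientGroup.mk'_apply]
  erw [QuotientGroup.lift_mk, CoprodI.lift_of]

lemma GraphProduct.retr_fix {G : SimpleGraph V} {Γ : V → Type*} [∀ v, Group (Γ v)]
    {S : Set V} {x : GraphProduct G Γ} (hx : x ∈ GraphProduct.full G Γ S) :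
    GraphProduct.retr G Γ S x = x := by
  induction hx using Subgroup.closure_induction with
  | mem y hy =>
    obtain ⟨_, ⟨u, rfl⟩, hu⟩ := hy
    obtain ⟨_, ⟨hu, rfl⟩, hy⟩ := hu
    obtain ⟨a, rfl⟩ := hy
    rw [GraphProduct.retr_of, if_pos hu]
  | one => exact map_one _
  | mul a b _ _ ha hb => rw [map_mul, ha, hb]
  | inv a _ ha => rw [map_inv, ha]

lemma GraphProduct.retr_kill {G : SimpleGraph V} {Γ : V → Type*} [∀ v, Group (Γ v)]
    {S T : Set V} (hdisj : ∀ v ∈ T, v ∉ S) {x : GraphProduct G Γ}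
    (hx : x ∈ GraphProduct.full G Γ T) :
    GraphProduct.retr G Γ S x = 1 := by
  induction hx using Subgroup.closure_induction with
  | mem y hy =>
    obtain ⟨_, ⟨u, rfl⟩, hu⟩ := hy
    obtain ⟨_, ⟨hu, rfl⟩, hy⟩ := hu
    obtain ⟨a, rfl⟩ := hy
    rw [GraphProduct.retr_of, if_neg (hdisj u hu)]
    rfl
  | one => exact map_one _
  | mul a b _ _ ha hb => rw [map_mul, ha, hb, mul_one]
  | inv a _ ha => rw [map_inv, ha, inv_one]

/-- For disjoint cliques `𝒞₁, 𝒞₂` of `𝒢` and any `g ∈ Γ`, the intersection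
`Γ_{𝒞₁} ∩ g Γ_{𝒞₂} g⁻¹` is trivial. -/
theorem stmt_15 {V : Type*} [Fintype V] (G : SimpleGraph V) (Γ : V → Type*)
    [∀ v, Group (Γ v)] (C₁ C₂ : Set V)
    (hC₁ : G.IsClique C₁) (hmax₁ : ∀ s : Set V, G.IsClique s → C₁ ⊆ s → s = C₁)
    (hC₂ : G.IsClique C₂) (hmax₂ : ∀ s : Set V, G.IsClique s → C₂ ⊆ s → s = C₂)
    (hdisj : C₁ ∩ C₂ = ∅) (g : GraphProduct G Γ) :
    GraphProduct.full G Γ C₁ ⊓ conjSub g (GraphProduct.full G Γ C₂) = ⊥ := by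
  rw [eq_bot_iff]
  rintro x ⟨hx1, hx2⟩
  obtain ⟨y, hy, rfl⟩ := hx2
  have hfix := GraphProduct.retr_fix hx1
  have hdisj' : ∀ v ∈ C₂, v ∉ C₁ := by
    intro v hv hv1
    exact absurd (Set.mem_inter hv1 hv) (by rw [hdisj]; exact Set.notMem_empty v)
  have hkill := GraphProduct.retr_kill hdisj' hy
  have : GraphProduct.retr G Γ C₁ ((MulAut.conj g).toMonoidHom y) = 1 := by
    simp only [MulEquiv.coe_toMonoidHom, MulAut.conj_apply, map_mul, map_inv, hkill]
    group
  rw [this] at hfix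
  rw [Subgroup.mem_bot]
  exact hfix.symm
end

section
/- Let W be a wreath-like product group in 𝒲ℛ(A, B ↷ I), i.e., W fits in an extension 1 → ⊕_{i∈I} Aᵢ → W →^ε B → 1 with each Aᵢ ≅ A and w Aᵢ w⁻¹ = A_{ε(w)i} for all w ∈ W, i ∈ I. If A is nontrivial and abelian, B is icc, and the action B ↷ I has infinite orbits, then W is an icc group. -/
/-- A group is icc if every nontrivial conjugacy class is infinite. -/
def IsICC (G : Type*) [Group G] : Prop :=
  ∀ g : G, g ≠ 1 → {x : G | ∃ h : G, h * g * h⁻¹ = x}.Infinite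

private lemma sup_decomp' {W : Type*} [Group W] {H K : Subgroup W}
    (hc : ∀ x ∈ H, ∀ y ∈ K, x * y = y * x) {g : W} (hg : g ∈ H ⊔ K) :
    ∃ a ∈ H, ∃ b ∈ K, g = a * b := by
  let P : Subgroup W :=
  { carrier := {g | ∃ a ∈ H, ∃ b ∈ K, g = a * b}
    one_mem' := ⟨1, H.one_mem, 1, K.one_mem, (one_mul 1).symm⟩
    mul_mem' := by
      rintro x y ⟨a1, ha1, b1, hb1, rfl⟩ ⟨a2, ha2, b2, hb2, rfl⟩
      refine ⟨a1 * a2, mul_mem ha1 ha2, b1 * b2, mul_mem hb1 hb2, ?_⟩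
      have h' : b1 * a2 = a2 * b1 := (hc a2 ha2 b1 hb1).symm
      rw [mul_assoc a1 b1, ← mul_assoc b1 a2 b2, h', mul_assoc a2 b1 b2, ← mul_assoc a1 a2]
    inv_mem' := by
      rintro x ⟨a, ha, b, hb, rfl⟩
      exact ⟨a⁻¹, inv_mem ha, b⁻¹, inv_mem hb, by rw [hc a ha b hb, mul_inv_rev]⟩ }
  have hH : H ≤ P := fun x hx => ⟨x, hx, 1, K.one_mem, (mul_one x).symm⟩
  have hK : K ≤ P := fun y hy => ⟨1, H.one_mem, y, hy, (one_mul y).symm⟩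
  exact sup_le hH hK hg

/-- A wreath-like product of a nontrivial abelian group `A` and an icc group `B` acting
on `I` with infinite orbits is icc.  The wreath-like structure on `W` is encoded by a
surjection `ε : W → B`, an action `σ` of `B` on `I`, and a family of subgroups
`A' i ≅ A` which pairwise commute, are independent, generate `ker ε`, and are permuted
by conjugation according to `σ ∘ ε`. -/
theorem stmt_17 {W B A : Type*} [Group W] [Group B] [CommGroup A] [Nontrivial A]
    {I : Type*} (ε : W →* B) (hsurj : Function.Surjective ε)
    (σ : B →* Equiv.Perm I) (A' : I → Subgroup W)
    (hiso : ∀ i, Nonempty (A' i ≃* A))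
    (hcomm : ∀ i j : I, i ≠ j → ∀ x ∈ A' i, ∀ y ∈ A' j, x * y = y * x)
    (hindep : ∀ i : I, A' i ⊓ (⨆ j ∈ ({i}ᶜ : Set I), A' j) = ⊥)
    (hker : (⨆ i, A' i) = ε.ker)
    (hconj : ∀ (w : W) (i : I),
      (A' i).map (MulAut.conj w).toMonoidHom = A' (σ (ε w) i))
    (hBicc : IsICC B)
    (horb : ∀ i : I, (Set.range fun b : B => σ b i).Infinite) :
    IsICC W := by
  classical
  intro g hg
  by_cases hεg : ε g = 1
  · -- g lies in the kernel, i.e. in the direct sum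
    have hgker : g ∈ ⨆ i, A' i := by rw [hker]; exact hεg
    set Q : Finset I → Subgroup W := fun s => ⨆ i ∈ s, A' i with hQ
    have hQmono : ∀ {s t : Finset I}, s ⊆ t → Q s ≤ Q t := by
      intro s t hst
      exact iSup₂_le fun i hi => le_iSup₂ (f := fun i (_ : i ∈ t) => A' i) i (hst hi)
    -- g lies in Q s for some finite s
    have hdir : Directed (· ≤ ·) Q := fun s t =>
      ⟨s ∪ t, hQmono Finset.subset_union_left, hQmono Finset.subset_union_right⟩
    have hgfin : ∃ s : Finset I, g ∈ Q s := by
      have h1 : (⨆ i, A' i) ≤ ⨆ s : Finset I, Q s := by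
        refine iSup_le fun i => le_trans ?_ (le_iSup Q {i})
        exact le_iSup₂ (f := fun j (_ : j ∈ ({i} : Finset I)) => A' j) i (Finset.mem_singleton_self i)
      exact (Subgroup.mem_iSup_of_directed hdir).1 (h1 hgker)
    -- minimal support
    have hex : ∃ n : ℕ, ∃ s : Finset I, s.card = n ∧ g ∈ Q s := by
      obtain ⟨s, hs⟩ := hgfin; exact ⟨s.card, s, rfl, hs⟩
    obtain ⟨s, hscard, hsmem⟩ := Nat.find_spec hex
    have hmin : ∀ t : Finset I, g ∈ Q t → ¬ t.card < s.card := by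
      intro t ht hlt
      rw [hscard] at hlt
      exact Nat.find_min hex hlt ⟨t, rfl, ht⟩
    have hsne : s.Nonempty := by
      rcases s.eq_empty_or_nonempty with rfl | h
      · exfalso
        apply hg
        have : Q (∅ : Finset I) = ⊥ := by simp [hQ]
        simpa [this] using hsmem
      · exact h
    obtain ⟨i₀, hi₀⟩ := hsne
    -- decompose g = a * h with a ∈ A' i₀ nontrivial
    have hcent : Q (s.erase i₀) ≤ Subgroup.centralizer (A' i₀) := by
      refine iSup₂_le fun j hj => ?_
      have hji : j ≠ i₀ := (Finset.mem_erase.1 hj).1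
      intro x hx
      rw [Subgroup.mem_centralizer_iff]
      intro y hy
      exact hcomm i₀ j (Ne.symm hji) y hy x hx
    have hsup : g ∈ A' i₀ ⊔ Q (s.erase i₀) := by
      refine (iSup₂_le fun j hj => ?_ : Q s ≤ A' i₀ ⊔ Q (s.erase i₀)) hsmem
      rcases eq_or_ne j i₀ with rfl | hne
      · exact le_sup_left
      · exact le_trans
          (le_iSup₂ (f := fun i (_ : i ∈ s.erase i₀) => A' i) j (Finset.mem_erase.2 ⟨hne, hj⟩))
          le_sup_right
    obtain ⟨a, haA, h, hhQ, hgab⟩ := sup_decomp'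
      (fun x hx y hy => Subgroup.mem_centralizer_iff.1 (hcent hy) x hx) hsup
    have hane : a ≠ 1 := by
      rintro rfl
      rw [one_mul] at hgab
      refine hmin (s.erase i₀) (hgab ▸ hhQ) ?_
      exact Finset.card_erase_lt_of_mem hi₀
    -- suppose the conjugacy class is finite
    by_contra hC
    rw [Set.not_infinite] at hC
    set C := {x : W | ∃ h0 : W, h0 * g * h0⁻¹ = x} with hCdef
    set piece : W → Set I := fun v => (fun w : W => σ (ε w) i₀) '' {w | w * g * w⁻¹ = v}
      with hpiece
    have hO : (Set.range fun b : B => σ b i₀) ⊆ ⋃ v ∈ C, piece v := by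
      rintro j ⟨b, rfl⟩
      obtain ⟨w, rfl⟩ := hsurj b
      exact Set.mem_biUnion ⟨w, rfl⟩ ⟨w, rfl, rfl⟩
    have hexv : ∃ v ∈ C, (piece v).Infinite := by
      by_contra hcon
      push_neg at hcon
      exact (horb i₀) ((Set.Finite.biUnion hC hcon).subset hO)
    obtain ⟨v, hvC, hT⟩ := hexv
    obtain ⟨j₁, w₁, hw₁v, hw₁j⟩ := hT.nonempty
    set S₁ : Finset I := s.image (σ (ε w₁)) with hS₁
    obtain ⟨j₂, hj₂T, hj₂S⟩ := (hT.diff S₁.finite_toSet).nonempty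
    obtain ⟨w₂, hw₂v, hw₂j⟩ := hj₂T
    simp only [Set.mem_setOf_eq] at hw₁v hw₂v
    -- the big "complement" subgroup
    set R : Subgroup W := ⨆ j ∈ ({j₂}ᶜ : Set I), A' j with hR
    have hAR : ∀ i : I, i ≠ j₂ → A' i ≤ R :=
      fun i hi => le_iSup₂ (f := fun j (_ : j ∈ ({j₂}ᶜ : Set I)) => A' j) i hi
    have key : ∀ (w : W) (t : Finset I), (∀ j ∈ t, σ (ε w) j ≠ j₂) →
        Q t ≤ Subgroup.comap (MulAut.conj w).toMonoidHom R := by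
      intro w t ht
      refine iSup₂_le fun j hj => Subgroup.map_le_iff_le_comap.1 ?_
      rw [hconj w j]
      exact hAR _ (ht j hj)
    -- v ∈ R, since j₂ ∉ S₁
    have hvR : v ∈ R := by
      have h1 : ∀ j ∈ s, σ (ε w₁) j ≠ j₂ := by
        intro j hj hEq
        exact hj₂S (by rw [← hEq]; exact Finset.mem_coe.2 (Finset.mem_image_of_mem _ hj))
      have := key w₁ s h1 hsmem
      rw [Subgroup.mem_comap] at this
      have hcalc : (MulAut.conj w₁).toMonoidHom g = v := by
        simpa using hw₁v
      rwa [hcalc] at this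
    -- h₂ ∈ R
    have hh₂R : w₂ * h * w₂⁻¹ ∈ R := by
      have h1 : ∀ j ∈ s.erase i₀, σ (ε w₂) j ≠ j₂ := by
        intro j hj hEq
        apply (Finset.mem_erase.1 hj).1
        rw [← hw₂j] at hEq
        exact (σ (ε w₂)).injective hEq
      exact (key w₂ (s.erase i₀) h1) hhQ
    -- a₂ ∈ A' j₂ and a₂ ≠ 1
    have ha₂A : w₂ * a * w₂⁻¹ ∈ A' j₂ := by
      rw [← hw₂j, ← hconj w₂ i₀]
      exact ⟨a, haA, rfl⟩
    have ha₂ne : w₂ * a * w₂⁻¹ ≠ 1 := by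
      intro hEq
      apply hane
      have := congrArg (fun x => w₂⁻¹ * x * w₂) hEq
      simpa [mul_assoc] using this
    -- a₂ = v * h₂⁻¹ ∈ R
    have hveq : v = (w₂ * a * w₂⁻¹) * (w₂ * h * w₂⁻¹) := by
      rw [← hw₂v, hgab]; group
    have ha₂R : w₂ * a * w₂⁻¹ ∈ R := by
      have : w₂ * a * w₂⁻¹ = v * (w₂ * h * w₂⁻¹)⁻¹ := by rw [hveq]; group
      rw [this]
      exact mul_mem hvR (inv_mem hh₂R)
    have : w₂ * a * w₂⁻¹ ∈ A' j₂ ⊓ R := ⟨ha₂A, ha₂R⟩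
    rw [hindep j₂] at this
    exact ha₂ne this
  · -- ε g ≠ 1 : use that B is icc
    have h1 : {y : B | ∃ k : B, k * ε g * k⁻¹ = y} ⊆
        ε '' {x : W | ∃ h : W, h * g * h⁻¹ = x} := by
      rintro y ⟨k, rfl⟩
      obtain ⟨h, rfl⟩ := hsurj k
      exact ⟨h * g * h⁻¹, ⟨h, rfl⟩, by simp [map_mul, map_inv]⟩
    exact Set.Infinite.of_image ε ((hBicc (ε g) hεg).mono h1)
end
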